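/- arXiv:1402.4087 — 2 statements merged into one kernel-verified Lean document; each statement's English description precedes it below -/
import Mathlib

section
/- Let L be a second-order Lagrangian, FL its restricted Legendre map, and define the extended Legendre map F̃L on the third-order jet coordinate space by adjoining to the components of FL the additional component p := L − Σ_{α,i} u^α_i p^i_α − Σ_{α,|I|=2} u^α_I ∂L/∂u^α_I, where p^i_α denote the momentum components of FL. Then at every point a of the third-order jet coordinate space the ranks of the total (Fréchet) derivatives coincide: rank D(F̃L)(a) = rank D(FL)(a). -/
open scoped BigOperators

noncomputable section

/-- Multi-indices on `Fin m` of total degree `k`. -/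
abbrev Idx (m k : ℕ) : Type := { I : Fin m → ℕ // ∑ i, I i = k }

instance (m k : ℕ) : Fintype (Idx m k) :=
  Fintype.subtype (Finset.Nat.antidiagonalTuple m k) fun _ =>
    Finset.Nat.mem_antidiagonalTuple

/-- The multi-index `1_i + 1_j`. -/
def idx2 {m : ℕ} (i j : Fin m) : Idx m 2 :=
  ⟨Pi.single i 1 + Pi.single j 1, by
    simp [Finset.sum_add_distrib, Finset.sum_pi_single']⟩

/-- The multi-index `I + 1_j`. -/
def Idx.succ {m k : ℕ} (I : Idx m k) (j : Fin m) : Idx m (k + 1) :=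
  ⟨I.1 + Pi.single j 1, by
    simp [Finset.sum_add_distrib, I.2, Finset.sum_pi_single']⟩

/-- The combinatorial factor `n(ij)`. -/
def nij {m : ℕ} (i j : Fin m) : ℝ := if i = j then 1 else 2

/-- Partial derivative of `f : ℝ^m → ℝ` in the `i`-th coordinate direction. -/
def pd {m : ℕ} (i : Fin m) (f : (Fin m → ℝ) → ℝ) : (Fin m → ℝ) → ℝ :=
  fun x => fderiv ℝ f x (Pi.single i 1)

/-- Iterated partial derivative `∂^I` associated to a multi-index `I`. -/
def pdI {m : ℕ} (I : Fin m → ℕ) (f : (Fin m → ℝ) → ℝ) : (Fin m → ℝ) → ℝ :=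
  (List.finRange m).foldr (fun i g => (pd i)^[I i] g) f

/-- Second-order jet coordinate space: coordinates `(xⁱ, uᵅ, uᵅᵢ, uᵅ_I)`, `|I| = 2`. -/
abbrev J2 (m n : ℕ) : Type :=
  (Fin m → ℝ) × (Fin n → ℝ) × (Fin m → Fin n → ℝ) × (Idx m 2 → Fin n → ℝ)

/-- Third-order jet coordinate space: additionally `uᵅ_J`, `|J| = 3`. -/
abbrev J3 (m n : ℕ) : Type :=
  (Fin m → ℝ) × (Fin n → ℝ) × (Fin m → Fin n → ℝ) × (Idx m 2 → Fin n → ℝ) ×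
    (Idx m 3 → Fin n → ℝ)

/-- Projection from third-order to second-order jet coordinates. -/
def π32 {m n : ℕ} (w : J3 m n) : J2 m n := (w.1, w.2.1, w.2.2.1, w.2.2.2.1)

/-- Second jet prolongation of `φ : ℝ^m → ℝ^n`. -/
def jet2 {m n : ℕ} (φ : (Fin m → ℝ) → Fin n → ℝ) (x : Fin m → ℝ) : J2 m n :=
  (x, φ x, fun i α => pd i (fun y => φ y α) x, fun I α => pdI I.1 (fun y => φ y α) x)

/-- Third jet prolongation of `φ : ℝ^m → ℝ^n`. -/
def jet3 {m n : ℕ} (φ : (Fin m → ℝ) → Fin n → ℝ) (x : Fin m → ℝ) : J3 m n :=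
  (x, φ x, fun i α => pd i (fun y => φ y α) x,
    fun I α => pdI I.1 (fun y => φ y α) x,
    fun J α => pdI J.1 (fun y => φ y α) x)

/-- Coordinate direction `∂/∂xʲ` in `J2`. -/
def eX {m n : ℕ} (j : Fin m) : J2 m n := (Pi.single j 1, 0, 0, 0)
/-- Coordinate direction `∂/∂uᵅ` in `J2`. -/
def eU {m n : ℕ} (α : Fin n) : J2 m n := (0, Pi.single α 1, 0, 0)
/-- Coordinate direction `∂/∂uᵅᵢ` in `J2`. -/
def eU1 {m n : ℕ} (i : Fin m) (α : Fin n) : J2 m n :=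
  (0, 0, Pi.single i (Pi.single α 1), 0)
/-- Coordinate direction `∂/∂uᵅ_I` in `J2`. -/
def eU2 {m n : ℕ} (I : Idx m 2) (α : Fin n) : J2 m n :=
  (0, 0, 0, Pi.single I (Pi.single α 1))

/-- Partial derivative `∂G/∂xʲ` of a function of the second-order jet coordinates. -/
def dX {m n : ℕ} (j : Fin m) (G : J2 m n → ℝ) : J2 m n → ℝ :=
  fun a => fderiv ℝ G a (eX j)
/-- Partial derivative `∂G/∂uᵅ`. -/
def dU {m n : ℕ} (α : Fin n) (G : J2 m n → ℝ) : J2 m n → ℝ :=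
  fun a => fderiv ℝ G a (eU α)
/-- Partial derivative `∂G/∂uᵅᵢ`. -/
def dU1 {m n : ℕ} (i : Fin m) (α : Fin n) (G : J2 m n → ℝ) : J2 m n → ℝ :=
  fun a => fderiv ℝ G a (eU1 i α)
/-- Partial derivative `∂G/∂uᵅ_I`, `|I| = 2`. -/
def dU2 {m n : ℕ} (I : Idx m 2) (α : Fin n) (G : J2 m n → ℝ) : J2 m n → ℝ :=
  fun a => fderiv ℝ G a (eU2 I α)

/-- Coordinate total derivative `D_j G`, a function of the third-order jet coordinates. -/
def totalD {m n : ℕ} (j : Fin m) (G : J2 m n → ℝ) : J3 m n → ℝ := fun w =>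
  dX j G (π32 w) + (∑ α, w.2.2.1 j α * dU α G (π32 w))
    + (∑ α, ∑ i, w.2.2.2.1 (idx2 i j) α * dU1 i α G (π32 w))
    + (∑ α, ∑ I : Idx m 2, w.2.2.2.2 (Idx.succ I j) α * dU2 I α G (π32 w))

/-- The first-order momentum components `pⁱᵅ` of the restricted Legendre map. -/
def FLp1 {m n : ℕ} (L : J2 m n → ℝ) (i : Fin m) (α : Fin n) : J3 m n → ℝ := fun w =>
  dU1 i α L (π32 w) - ∑ j, (nij i j)⁻¹ * totalD j (dU2 (idx2 i j) α L) w

/-- Euler–Lagrange expression of a second-order Lagrangian `L` at `φ`. -/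
def EL {m n : ℕ} (L : J2 m n → ℝ) (φ : (Fin m → ℝ) → Fin n → ℝ) (α : Fin n) :
    (Fin m → ℝ) → ℝ := fun x =>
  dU α L (jet2 φ x)
    - (∑ i, pd i (fun y => dU1 i α L (jet2 φ y)) x)
    + ∑ I : Idx m 2, pdI I.1 (fun y => dU2 I α L (jet2 φ y)) x

/-- Restricted 2-symmetric multimomentum coordinates `(xⁱ, uᵅ, uᵅᵢ, pⁱᵅ, p^Iᵅ)`. -/
abbrev Mom (m n : ℕ) : Type :=
  (Fin m → ℝ) × (Fin n → ℝ) × (Fin m → Fin n → ℝ) × (Fin m → Fin n → ℝ) ×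
    (Idx m 2 → Fin n → ℝ)

/-- The restricted Legendre map `FL : J³π → J²π^‡`. -/
def FLmap {m n : ℕ} (L : J2 m n → ℝ) : J3 m n → Mom m n := fun w =>
  (w.1, w.2.1, w.2.2.1, fun i α => FLp1 L i α w, fun I α => dU2 I α L (π32 w))

/-- The extended Legendre map `F̃L : J³π → J²π^†`, adjoining the component
`p = L − Σ uᵅᵢ pⁱᵅ − Σ uᵅ_I ∂L/∂uᵅ_I`. -/
def FLext {m n : ℕ} (L : J2 m n → ℝ) : J3 m n → Mom m n × ℝ := fun w =>
  (FLmap L w,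
    L (π32 w) - (∑ α, ∑ i, w.2.2.1 i α * FLp1 L i α w)
      - ∑ α, ∑ I : Idx m 2, w.2.2.2.1 I α * dU2 I α L (π32 w))

/-! ### Auxiliary material for `statement4` -/

section Aux

variable {m n : ℕ}

lemma top_add_one_le : ((⊤:ℕ∞) : WithTop ℕ∞) + 1 ≤ ((⊤:ℕ∞) : WithTop ℕ∞) := by
  exact_mod_cast le_top

lemma one_le_top' : (1 : WithTop ℕ∞) ≤ ((⊤:ℕ∞) : WithTop ℕ∞) := by exact_mod_cast le_top

/-- `π32` as a continuous linear map. -/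
def piL (m n : ℕ) : J3 m n →L[ℝ] J2 m n :=
  LinearMap.toContinuousLinearMap
    { toFun := π32, map_add' := fun _ _ => rfl, map_smul' := fun _ _ => rfl }

lemma piL_apply (w : J3 m n) : piL m n w = π32 w := by
  simp [piL]
  rfl

/-- Coordinate functional `w ↦ w.2.2.1 i α` on `J3`. -/
def cU1L (i : Fin m) (α : Fin n) : J3 m n →L[ℝ] ℝ :=
  LinearMap.toContinuousLinearMap
    { toFun := fun w => w.2.2.1 i α, map_add' := fun _ _ => rfl,
      map_smul' := fun _ _ => rfl }

lemma cU1L_apply (i : Fin m) (α : Fin n) (w : J3 m n) : cU1L i α w = w.2.2.1 i α := by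
  simp [cU1L]

/-- Coordinate functional `w ↦ w.2.2.2.1 I α` on `J3`. -/
def cU2L (I : Idx m 2) (α : Fin n) : J3 m n →L[ℝ] ℝ :=
  LinearMap.toContinuousLinearMap
    { toFun := fun w => w.2.2.2.1 I α, map_add' := fun _ _ => rfl,
      map_smul' := fun _ _ => rfl }

lemma cU2L_apply (I : Idx m 2) (α : Fin n) (w : J3 m n) :
    cU2L I α w = w.2.2.2.1 I α := by simp [cU2L]

/-- Coordinate functional `w ↦ w.2.2.2.2 J α` on `J3`. -/
def cU3L (J : Idx m 3) (α : Fin n) : J3 m n →L[ℝ] ℝ :=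
  LinearMap.toContinuousLinearMap
    { toFun := fun w => w.2.2.2.2 J α, map_add' := fun _ _ => rfl,
      map_smul' := fun _ _ => rfl }

lemma cU3L_apply (J : Idx m 3) (α : Fin n) (w : J3 m n) :
    cU3L J α w = w.2.2.2.2 J α := by simp [cU3L]

/-- Coordinate block `w ↦ w.1` on `J3`. -/
def c1L (m n : ℕ) : J3 m n →L[ℝ] (Fin m → ℝ) :=
  LinearMap.toContinuousLinearMap
    { toFun := fun w => w.1, map_add' := fun _ _ => rfl, map_smul' := fun _ _ => rfl }

/-- Coordinate block `w ↦ w.2.1` on `J3`. -/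
def c2L (m n : ℕ) : J3 m n →L[ℝ] (Fin n → ℝ) :=
  LinearMap.toContinuousLinearMap
    { toFun := fun w => w.2.1, map_add' := fun _ _ => rfl, map_smul' := fun _ _ => rfl }

/-- Coordinate block `w ↦ w.2.2.1` on `J3`. -/
def c3L (m n : ℕ) : J3 m n →L[ℝ] (Fin m → Fin n → ℝ) :=
  LinearMap.toContinuousLinearMap
    { toFun := fun w => w.2.2.1, map_add' := fun _ _ => rfl, map_smul' := fun _ _ => rfl }

lemma contDiff_fderiv_apply {f : J2 m n → ℝ} (hf : ContDiff ℝ (⊤ : ℕ∞) f) (v : J2 m n) :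
    ContDiff ℝ (⊤ : ℕ∞) (fun x => fderiv ℝ f x v) :=
  (hf.fderiv_right top_add_one_le).clm_apply contDiff_const

lemma contDiff_dX {f : J2 m n → ℝ} (hf : ContDiff ℝ (⊤ : ℕ∞) f) (j : Fin m) :
    ContDiff ℝ (⊤ : ℕ∞) (dX j f) := contDiff_fderiv_apply hf _

lemma contDiff_dU {f : J2 m n → ℝ} (hf : ContDiff ℝ (⊤ : ℕ∞) f) (α : Fin n) :
    ContDiff ℝ (⊤ : ℕ∞) (dU α f) := contDiff_fderiv_apply hf _

lemma contDiff_dU1 {f : J2 m n → ℝ} (hf : ContDiff ℝ (⊤ : ℕ∞) f) (i : Fin m) (α : Fin n) :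
    ContDiff ℝ (⊤ : ℕ∞) (dU1 i α f) := contDiff_fderiv_apply hf _

lemma contDiff_dU2 {f : J2 m n → ℝ} (hf : ContDiff ℝ (⊤ : ℕ∞) f) (I : Idx m 2) (α : Fin n) :
    ContDiff ℝ (⊤ : ℕ∞) (dU2 I α f) := contDiff_fderiv_apply hf _

lemma contDiff_comp_pi32 {g : J2 m n → ℝ} (hg : ContDiff ℝ (⊤ : ℕ∞) g) :
    ContDiff ℝ (⊤ : ℕ∞) (fun w : J3 m n => g (π32 w)) := by
  have := hg.comp (piL m n).contDiff
  simpa [Function.comp_def, piL_apply] using this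

lemma contDiff_totalD {g : J2 m n → ℝ} (hg : ContDiff ℝ (⊤ : ℕ∞) g) (j : Fin m) :
    ContDiff ℝ (⊤ : ℕ∞) (totalD j g) := by
  unfold totalD
  refine ContDiff.add (ContDiff.add (ContDiff.add ?_ ?_) ?_) ?_
  · exact contDiff_comp_pi32 (contDiff_dX hg j)
  · refine ContDiff.sum fun α _ => ContDiff.mul ?_ (contDiff_comp_pi32 (contDiff_dU hg α))
    exact (cU1L (m := m) (n := n) j α).contDiff
  · refine ContDiff.sum fun α _ => ContDiff.sum fun i _ =>
      ContDiff.mul ?_ (contDiff_comp_pi32 (contDiff_dU1 hg i α))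
    exact (cU2L (m := m) (n := n) (idx2 i j) α).contDiff
  · refine ContDiff.sum fun α _ => ContDiff.sum fun I _ =>
      ContDiff.mul ?_ (contDiff_comp_pi32 (contDiff_dU2 hg I α))
    exact (cU3L (m := m) (n := n) (Idx.succ I j) α).contDiff

lemma contDiff_FLp1 {L : J2 m n → ℝ} (hL : ContDiff ℝ (⊤ : ℕ∞) L) (i : Fin m) (α : Fin n) :
    ContDiff ℝ (⊤ : ℕ∞) (FLp1 L i α) := by
  unfold FLp1
  refine ContDiff.sub (contDiff_comp_pi32 (contDiff_dU1 hL i α)) ?_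
  exact ContDiff.sum fun j _ =>
    contDiff_const.mul (contDiff_totalD (contDiff_dU2 hL (idx2 i j) α) j)

/-- Decomposition of a linear functional on `J2` along the coordinate directions. -/
lemma decomp (T : J2 m n →L[ℝ] ℝ) (w : J2 m n) :
    T w = (∑ j, w.1 j * T (eX j)) + (∑ α, w.2.1 α * T (eU α))
      + (∑ α, ∑ i, w.2.2.1 i α * T (eU1 i α))
      + (∑ α, ∑ I : Idx m 2, T (eU2 I α) * w.2.2.2 I α) := by
  have hw : w = ((∑ j, w.1 j • eX j) + (∑ α, w.2.1 α • eU α)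
      + (∑ α, ∑ i, w.2.2.1 i α • eU1 i α)
      + (∑ α, ∑ I : Idx m 2, w.2.2.2 I α • eU2 I α)) := by
    refine Prod.ext ?_ (Prod.ext ?_ (Prod.ext ?_ ?_)) <;> funext x <;> (try funext y) <;>
      simp [eX, eU, eU1, eU2, Prod.fst_sum, Prod.snd_sum, Finset.sum_apply,
        Pi.single_apply, mul_ite, Finset.sum_ite_eq, Finset.sum_ite_eq']
  calc T w = T ((∑ j, w.1 j • eX j) + (∑ α, w.2.1 α • eU α)
      + (∑ α, ∑ i, w.2.2.1 i α • eU1 i α)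
      + (∑ α, ∑ I : Idx m 2, w.2.2.2 I α • eU2 I α)) := by rw [← hw]
  _ = _ := by
      simp [map_add, map_sum, map_smul, smul_eq_mul, mul_comm]

end Aux

section Main

variable {m n : ℕ}

/-- Coordinate functional `q ↦ q.1 j` on `Mom`. -/
def mXL (j : Fin m) : Mom m n →L[ℝ] ℝ :=
  LinearMap.toContinuousLinearMap
    { toFun := fun q => q.1 j, map_add' := fun _ _ => rfl, map_smul' := fun _ _ => rfl }

/-- Coordinate functional `q ↦ q.2.1 α` on `Mom`. -/
def mUL (α : Fin n) : Mom m n →L[ℝ] ℝ :=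
  LinearMap.toContinuousLinearMap
    { toFun := fun q => q.2.1 α, map_add' := fun _ _ => rfl, map_smul' := fun _ _ => rfl }

/-- Coordinate functional `q ↦ q.2.2.1 i α` on `Mom`. -/
def mU1L (i : Fin m) (α : Fin n) : Mom m n →L[ℝ] ℝ :=
  LinearMap.toContinuousLinearMap
    { toFun := fun q => q.2.2.1 i α, map_add' := fun _ _ => rfl, map_smul' := fun _ _ => rfl }

/-- Coordinate functional `q ↦ q.2.2.2.1 i α` on `Mom`. -/
def mP1L (i : Fin m) (α : Fin n) : Mom m n →L[ℝ] ℝ :=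
  LinearMap.toContinuousLinearMap
    { toFun := fun q => q.2.2.2.1 i α, map_add' := fun _ _ => rfl, map_smul' := fun _ _ => rfl }

/-- Coordinate functional `q ↦ q.2.2.2.2 I α` on `Mom`. -/
def mP2L (I : Idx m 2) (α : Fin n) : Mom m n →L[ℝ] ℝ :=
  LinearMap.toContinuousLinearMap
    { toFun := fun q => q.2.2.2.2 I α, map_add' := fun _ _ => rfl, map_smul' := fun _ _ => rfl }

/-- The linear functional `ℓ` on momentum space encoding the differential of the extra
component of the extended Legendre map in terms of the differential of `FLmap`. -/
def ell (L : J2 m n → ℝ) (a : J3 m n) : Mom m n →L[ℝ] ℝ :=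
  (∑ j, dX j L (π32 a) • mXL j) + (∑ α, dU α L (π32 a) • mUL α)
  + (∑ α, ∑ i, ((dU1 i α L (π32 a) - FLp1 L i α a) • mU1L i α))
  - (∑ α, ∑ i, a.2.2.1 i α • mP1L i α)
  - (∑ α, ∑ I : Idx m 2, a.2.2.2.1 I α • mP2L I α)

lemma ell_apply (L : J2 m n → ℝ) (a : J3 m n) (q : Mom m n) :
    ell L a q = (∑ j, q.1 j * dX j L (π32 a)) + (∑ α, q.2.1 α * dU α L (π32 a))
      + (∑ α, ∑ i, (q.2.2.1 i α * dU1 i α L (π32 a) - FLp1 L i α a * q.2.2.1 i α))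
      - (∑ α, ∑ i, a.2.2.1 i α * q.2.2.2.1 i α)
      - (∑ α, ∑ I : Idx m 2, a.2.2.2.1 I α * q.2.2.2.2 I α) := by
  simp [ell, mXL, mUL, mU1L, mP1L, mP2L, ContinuousLinearMap.sum_apply, smul_eq_mul,
    sub_mul, mul_comm]

/-- Derivative of the first-order momentum component. -/
def A1 (L : J2 m n → ℝ) (i : Fin m) (α : Fin n) (a : J3 m n) : J3 m n →L[ℝ] ℝ :=
  fderiv ℝ (FLp1 L i α) a

/-- Derivative of the second-order momentum component. -/
def A2 (L : J2 m n → ℝ) (I : Idx m 2) (α : Fin n) (a : J3 m n) : J3 m n →L[ℝ] ℝ :=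
  fderiv ℝ (fun w : J3 m n => dU2 I α L (π32 w)) a

/-- The derivative of the restricted Legendre map, assembled from its components. -/
def bigA (L : J2 m n → ℝ) (a : J3 m n) : J3 m n →L[ℝ] Mom m n :=
  (c1L m n).prod ((c2L m n).prod ((c3L m n).prod
    ((ContinuousLinearMap.pi fun i => ContinuousLinearMap.pi fun α => A1 L i α a).prod
      (ContinuousLinearMap.pi fun I => ContinuousLinearMap.pi fun α => A2 L I α a))))

lemma hasFDerivAt_FLp1 {L : J2 m n → ℝ} (hL : ContDiff ℝ (⊤ : ℕ∞) L) (i : Fin m)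
    (α : Fin n) (a : J3 m n) : HasFDerivAt (FLp1 L i α) (A1 L i α a) a :=
  (((contDiff_FLp1 hL i α).differentiable (by simp)) a).hasFDerivAt

lemma hasFDerivAt_p2 {L : J2 m n → ℝ} (hL : ContDiff ℝ (⊤ : ℕ∞) L) (I : Idx m 2)
    (α : Fin n) (a : J3 m n) :
    HasFDerivAt (fun w : J3 m n => dU2 I α L (π32 w)) (A2 L I α a) a :=
  (((contDiff_comp_pi32 (contDiff_dU2 hL I α)).differentiable (by simp)) a).hasFDerivAt

lemma hasFDerivAt_FLmap {L : J2 m n → ℝ} (hL : ContDiff ℝ (⊤ : ℕ∞) L) (a : J3 m n) :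
    HasFDerivAt (FLmap L) (bigA L a) a := by
  refine HasFDerivAt.prodMk ?_ (HasFDerivAt.prodMk ?_ (HasFDerivAt.prodMk ?_
    (HasFDerivAt.prodMk ?_ ?_)))
  · exact (c1L m n).hasFDerivAt
  · exact (c2L m n).hasFDerivAt
  · exact (c3L m n).hasFDerivAt
  · exact hasFDerivAt_pi.2 fun i => hasFDerivAt_pi.2 fun α => hasFDerivAt_FLp1 hL i α a
  · exact hasFDerivAt_pi.2 fun I => hasFDerivAt_pi.2 fun α => hasFDerivAt_p2 hL I α a

/-- Derivative of the extra component of the extended Legendre map. -/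
def bigD (L : J2 m n → ℝ) (a : J3 m n) : J3 m n →L[ℝ] ℝ :=
  ((fderiv ℝ L (π32 a)).comp (piL m n))
  - (∑ α, ∑ i, (a.2.2.1 i α • A1 L i α a + FLp1 L i α a • cU1L i α))
  - (∑ α, ∑ I : Idx m 2, (a.2.2.2.1 I α • A2 L I α a + dU2 I α L (π32 a) • cU2L I α))

lemma hasFDerivAt_P {L : J2 m n → ℝ} (hL : ContDiff ℝ (⊤ : ℕ∞) L) (a : J3 m n) :
    HasFDerivAt (fun w : J3 m n =>
      L (π32 w) - (∑ α, ∑ i, w.2.2.1 i α * FLp1 L i α w)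
        - ∑ α, ∑ I : Idx m 2, w.2.2.2.1 I α * dU2 I α L (π32 w)) (bigD L a) a := by
  refine HasFDerivAt.sub (HasFDerivAt.sub ?_ ?_) ?_
  · have h1 : HasFDerivAt L (fderiv ℝ L (π32 a)) (π32 a) :=
      ((hL.differentiable (by simp)) (π32 a)).hasFDerivAt
    have h2 : HasFDerivAt (piL m n) (piL m n) a := (piL m n).hasFDerivAt
    have := h1.comp a (by exact h2)
    simpa [Function.comp_def, piL_apply] using this
  · refine HasFDerivAt.fun_sum fun α _ => HasFDerivAt.fun_sum fun i _ => ?_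
    have hc : HasFDerivAt (fun w : J3 m n => w.2.2.1 i α) (cU1L i α) a := by
      exact (cU1L (m := m) (n := n) i α).hasFDerivAt (x := a)
    simpa using hc.fun_mul (hasFDerivAt_FLp1 hL i α a)
  · refine HasFDerivAt.fun_sum fun α _ => HasFDerivAt.fun_sum fun I _ => ?_
    have hc : HasFDerivAt (fun w : J3 m n => w.2.2.2.1 I α) (cU2L I α) a := by
      exact (cU2L (m := m) (n := n) I α).hasFDerivAt (x := a)
    simpa using hc.fun_mul (hasFDerivAt_p2 hL I α a)

lemma key {L : J2 m n → ℝ} (a v : J3 m n) :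
    bigD L a v = ell L a (bigA L a v) := by
  have hA : bigA L a v = (v.1, v.2.1, v.2.2.1,
      (fun i α => A1 L i α a v), (fun I α => A2 L I α a v)) := by
    simp [bigA, c1L, c2L, c3L, ContinuousLinearMap.prod_apply]
  rw [hA, ell_apply]
  have hD : bigD L a v = fderiv ℝ L (π32 a) (π32 v)
      - (∑ α, ∑ i, (a.2.2.1 i α * A1 L i α a v + FLp1 L i α a * v.2.2.1 i α))
      - (∑ α, ∑ I : Idx m 2, (a.2.2.2.1 I α * A2 L I α a v
          + dU2 I α L (π32 a) * v.2.2.2.1 I α)) := by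
    simp [bigD, ContinuousLinearMap.sum_apply, smul_eq_mul, piL_apply, cU1L_apply, cU2L_apply]
  rw [hD, decomp (fderiv ℝ L (π32 a)) (π32 v)]
  have hπ : (π32 v).1 = v.1 := rfl
  have hdX : ∀ j, fderiv ℝ L (π32 a) (eX j) = dX j L (π32 a) := fun _ => rfl
  have hdU : ∀ α, fderiv ℝ L (π32 a) (eU α) = dU α L (π32 a) := fun _ => rfl
  have hdU1 : ∀ i α, fderiv ℝ L (π32 a) (eU1 i α) = dU1 i α L (π32 a) := fun _ _ => rfl
  have hdU2 : ∀ (I : Idx m 2) α, fderiv ℝ L (π32 a) (eU2 I α) = dU2 I α L (π32 a) :=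
    fun _ _ => rfl
  simp only [hπ, hdX, hdU, hdU1, hdU2]
  simp only [π32, Finset.sum_add_distrib, Finset.sum_sub_distrib]
  ring

end Main


/-- at every point the ranks of the Fréchet derivatives of the extended and
restricted Legendre maps coincide. -/
theorem statement4 (m n : ℕ) (L : J2 m n → ℝ) (hL : ContDiff ℝ (⊤ : ℕ∞) L)
    (a : J3 m n) :
    LinearMap.rank ((fderiv ℝ (FLext L) a).toLinearMap)
      = LinearMap.rank ((fderiv ℝ (FLmap L) a).toLinearMap) := by
  
  have hext : HasFDerivAt (FLext L) ((bigA L a).prod (bigD L a)) a :=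
    (hasFDerivAt_FLmap hL a).prodMk (hasFDerivAt_P hL a)
  have hcomp : (bigA L a).prod (bigD L a)
      = (((ContinuousLinearMap.id ℝ (Mom m n)).prod (ell L a)).comp (bigA L a)) := by
    apply ContinuousLinearMap.ext; intro v
    exact Prod.ext rfl (key a v)
  rw [hext.fderiv, (hasFDerivAt_FLmap hL a).fderiv, hcomp]
  have hinj : Function.Injective
      (((ContinuousLinearMap.id ℝ (Mom m n)).prod (ell L a)) :
        Mom m n →ₗ[ℝ] Mom m n × ℝ) :=
    fun q q' h => congrArg Prod.fst h
  rw [ContinuousLinearMap.toLinearMap_comp]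
  show Module.rank ℝ (LinearMap.range (LinearMap.comp _ _)) = _
  rw [LinearMap.range_comp]
  exact ((Submodule.equivMapOfInjective _ hinj _).rank_eq).symm
end
end

section
/- Let L be a second-order Lagrangian and let f = (f^α_I)_{α,|I|=2} be a smooth map assigning to each (x, u, u_i, p^I) ∈ ℝ^m × ℝ^n × (ℝ^n)^m × (ℝ^n)^{s₂} a point f(x,u,u_i,p^I) ∈ (ℝ^n)^{s₂} which is a two-sided inverse of the fiber derivative of L in the highest-order velocities, i.e. (∂L/∂u^α_K)(x,u,u_i,f(x,u,u_i,p^I)) = p^K_α for all arguments, and f^α_I(x,u,u_i,((∂L/∂u^β_K)(x,u,u_i,w))_{β,K}) = w^α_I for all (x,u,u_i,w). Define H(x,u,u_i,p^i,p^I) := Σ_{α,i} p^i_α u^α_i + Σ_{α,|I|=2} p^I_α f^α_I(x,u,u_i,p^I) − L(x,u,u_i,f(x,u,u_i,p^I)). Then a smooth map φ : ℝ^m → ℝ^n satisfies the Euler–Lagrange field equations of L if and only if there exist smooth functions u^α_i, p^i_α, p^I_α : ℝ^m → ℝ such that, with u := φ and all partial derivatives of H evaluated at (x, u(x), u_i(x),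 p^i(x), p^I(x)), the Hamilton–De Donder–Weyl equations hold on ℝ^m: ∂u^α/∂x^i = ∂H/∂p^i_α; Σ_{1_i+1_j = I} (1/n(ij)) ∂u^α_i/∂x^j = ∂H/∂p^I_α for each |I| = 2; Σ_{i=1}^m ∂p^i_α/∂x^i = −∂H/∂u^α; and Σ_{j=1}^m (1/n(ij)) ∂p^{1_i+1_j}_α/∂x^j = −∂H/∂u^α_i. -/
open scoped BigOperators

noncomputable section

/-- The multimomentum phase space coordinates `(xⁱ, uᵅ, uᵅᵢ, pⁱᵅ, p^Iᵅ)`. -/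
abbrev Pb (m n : ℕ) : Type :=
  (Fin m → ℝ) × (Fin n → ℝ) × (Fin m → Fin n → ℝ) × (Fin m → Fin n → ℝ) ×
    (Idx m 2 → Fin n → ℝ)

/-- Arguments `(x, u, uᵢ, p^I)` of the fiber-inverse map `f`. -/
abbrev Pf (m n : ℕ) : Type :=
  (Fin m → ℝ) × (Fin n → ℝ) × (Fin m → Fin n → ℝ) × (Idx m 2 → Fin n → ℝ)

/-- Coordinate direction `∂/∂uᵅ` in `Pb`. -/
def ePU {m n : ℕ} (α : Fin n) : Pb m n := (0, Pi.single α 1, 0, 0, 0)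
/-- Coordinate direction `∂/∂uᵅᵢ` in `Pb`. -/
def ePU1 {m n : ℕ} (i : Fin m) (α : Fin n) : Pb m n :=
  (0, 0, Pi.single i (Pi.single α 1), 0, 0)
/-- Coordinate direction `∂/∂pⁱᵅ` in `Pb`. -/
def eP1 {m n : ℕ} (i : Fin m) (α : Fin n) : Pb m n :=
  (0, 0, 0, Pi.single i (Pi.single α 1), 0)
/-- Coordinate direction `∂/∂p^Iᵅ` in `Pb`. -/
def eP2 {m n : ℕ} (I : Idx m 2) (α : Fin n) : Pb m n :=
  (0, 0, 0, 0, Pi.single I (Pi.single α 1))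

/-- The local Hamiltonian function
`H = Σ pⁱᵅ uᵅᵢ + Σ p^Iᵅ fᵅ_I(x,u,uᵢ,p^I) − L(x, u, uᵢ, f(x,u,uᵢ,p^I))`. -/
def Ham {m n : ℕ} (L : J2 m n → ℝ) (f : Pf m n → (Idx m 2 → Fin n → ℝ)) :
    Pb m n → ℝ := fun v =>
  (∑ α, ∑ i, v.2.2.2.1 i α * v.2.2.1 i α)
    + (∑ α, ∑ I : Idx m 2, v.2.2.2.2 I α * f (v.1, v.2.1, v.2.2.1, v.2.2.2.2) I α)
    - L (v.1, v.2.1, v.2.2.1, f (v.1, v.2.1, v.2.2.1, v.2.2.2.2))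

/-- The section of the phase space determined by `φ` and the component functions
`u₁, p₁, p₂`. -/
def sec {m n : ℕ} (φ : (Fin m → ℝ) → Fin n → ℝ)
    (u1 : Fin m → Fin n → (Fin m → ℝ) → ℝ)
    (p1 : Fin m → Fin n → (Fin m → ℝ) → ℝ)
    (p2 : Idx m 2 → Fin n → (Fin m → ℝ) → ℝ) (x : Fin m → ℝ) : Pb m n :=
  (x, φ x, fun i α => u1 i α x, fun i α => p1 i α x, fun I α => p2 I α x)

lemma single_eq_of_sum_eq_one {m : ℕ} (g : Fin m → ℕ) (hg : ∑ i, g i = 1) :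
    ∃ j, g = Pi.single j 1 := by
  have h1 : ∃ j, g j ≠ 0 := by
    by_contra h; push_neg at h
    simp [h] at hg
  obtain ⟨j, hj⟩ := h1
  have hle : g j ≤ 1 := hg ▸ Finset.single_le_sum (f := g) (fun i _ => Nat.zero_le _) (Finset.mem_univ j)
  have hgj : g j = 1 := le_antisymm hle (Nat.one_le_iff_ne_zero.2 hj)
  have hrest : ∑ i ∈ Finset.univ.erase j, g i = 0 := by
    have := Finset.add_sum_erase Finset.univ g (Finset.mem_univ j)
    omega
  refine ⟨j, funext fun k => ?_⟩
  rcases eq_or_ne k j with rfl | hk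
  · simp [hgj]
  · have : g k = 0 :=
      Finset.sum_eq_zero_iff.1 hrest k (Finset.mem_erase.2 ⟨hk, Finset.mem_univ k⟩)
    simp [this, Pi.single_eq_of_ne hk]

lemma idx2_classify {m : ℕ} (I : Idx m 2) : ∃ i j, I = idx2 i j := by
  obtain ⟨g, hg⟩ := I
  have h1 : ∃ i, g i ≠ 0 := by
    by_contra h; push_neg at h
    simp [h] at hg
  obtain ⟨i, hi⟩ := h1
  have hle : g i ≤ 2 := hg ▸ Finset.single_le_sum (f := g) (fun i _ => Nat.zero_le _) (Finset.mem_univ i)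
  have hrest : g i + ∑ k ∈ Finset.univ.erase i, g k = 2 :=
    (Finset.add_sum_erase Finset.univ g (Finset.mem_univ i)).trans hg
  have h12 : g i = 1 ∨ g i = 2 := by omega
  rcases h12 with h2 | h2
  · -- g i = 1, rest sums to 1
    have herase : ∑ k ∈ Finset.univ.erase i, g k = 1 := by omega
    have hsum : ∑ k, Function.update g i 0 k = 1 := by
      rw [← Finset.add_sum_erase Finset.univ _ (Finset.mem_univ i),
        Function.update_self,
        Finset.sum_congr rfl (fun k hk =>
          Function.update_of_ne (Finset.mem_erase.1 hk).1 0 g),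
        herase]
    obtain ⟨j, hj⟩ := single_eq_of_sum_eq_one _ hsum
    have hji : j ≠ i := by
      intro h
      subst h
      have := congrFun hj j
      simp at this
    refine ⟨i, j, Subtype.ext (funext fun k => ?_)⟩
    show g k = ((Pi.single i 1 + Pi.single j 1 : Fin m → ℕ)) k
    rw [Pi.add_apply]
    rcases eq_or_ne k i with rfl | hk
    · rw [Pi.single_eq_same, Pi.single_eq_of_ne (Ne.symm hji), h2]; omega
    · have hupd := congrFun hj k
      rw [Function.update_of_ne hk] at hupd
      rw [Pi.single_eq_of_ne hk, hupd, zero_add]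
  · -- g i = 2
    refine ⟨i, i, Subtype.ext (funext fun k => ?_)⟩
    show g k = ((Pi.single i 1 + Pi.single i 1 : Fin m → ℕ)) k
    rw [Pi.add_apply]
    rcases eq_or_ne k i with rfl | hk
    · rw [Pi.single_eq_same, h2]
    · have hk0 : g k = 0 := Finset.sum_eq_zero_iff.1 (by omega) k
        (Finset.mem_erase.2 ⟨hk, Finset.mem_univ k⟩)
      rw [Pi.single_eq_of_ne hk, hk0]; omega

lemma idx2_eq_iff {m : ℕ} (i j k l : Fin m) :
    idx2 i j = idx2 k l ↔ (i = k ∧ j = l) ∨ (i = l ∧ j = k) := by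
  constructor
  · intro h
    have h' : (Pi.single i 1 + Pi.single j 1 : Fin m → ℕ) = Pi.single k 1 + Pi.single l 1 :=
      congrArg Subtype.val h
    by_cases hik : i = k
    · subst hik
      have hcan := add_left_cancel h'
      by_cases hjl' : j = l
      · exact Or.inl ⟨rfl, hjl'⟩
      · exfalso
        have hjl := congrFun hcan j
        rw [Pi.single_eq_same, Pi.single_eq_of_ne hjl'] at hjl
        omega
    · right
      have hat_i := congrFun h' i
      simp only [Pi.add_apply, Pi.single_eq_same] at hat_i
      rw [Pi.single_eq_of_ne hik 1] at hat_i
      have hil : i = l := by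
        by_contra hil
        rw [Pi.single_eq_of_ne hil 1] at hat_i
        omega
      subst hil
      refine ⟨rfl, ?_⟩
      have hat_k := congrFun h' k
      simp only [Pi.add_apply, Pi.single_eq_same] at hat_k
      rw [Pi.single_eq_of_ne (Ne.symm hik) 1] at hat_k
      by_contra hjk
      rw [Pi.single_eq_of_ne (fun hh => hjk hh.symm) 1] at hat_k
      omega
  · rintro (⟨rfl, rfl⟩ | ⟨rfl, rfl⟩)
    · rfl
    · exact Subtype.ext (add_comm _ _)

section pdcalc
variable {m : ℕ}

lemma smooth_pd {f : (Fin m → ℝ) → ℝ} (hf : ContDiff ℝ (⊤:ℕ∞) f) (i : Fin m) :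
    ContDiff ℝ (⊤:ℕ∞) (pd i f) :=
  (hf.fderiv_right (by exact_mod_cast le_top)).clm_apply contDiff_const

lemma pd_comm {f : (Fin m → ℝ) → ℝ} (hf : ContDiff ℝ (⊤:ℕ∞) f) (i j : Fin m) :
    pd i (pd j f) = pd j (pd i f) := by
  funext x
  have hdf : ContDiff ℝ (⊤:ℕ∞) (fderiv ℝ f) := hf.fderiv_right (by exact_mod_cast le_top)
  have h1 : ∀ (v w : Fin m → ℝ),
      fderiv ℝ (fderiv ℝ f) x v w = fderiv ℝ (fderiv ℝ f) x w v :=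
    second_derivative_symmetric
      (fun y => (hf.differentiable (by simp) y).hasFDerivAt)
      ((hdf.differentiable (by simp) x).hasFDerivAt)
  have h2 : ∀ (v w : Fin m → ℝ),
      fderiv ℝ (fun y => fderiv ℝ f y w) x v = fderiv ℝ (fderiv ℝ f) x v w := by
    intro v w
    rw [fderiv_clm_apply ((hdf.differentiable (by simp)) x)
      (differentiableAt_const w)]
    simp
  show fderiv ℝ (fun y => fderiv ℝ f y (Pi.single j 1)) x (Pi.single i 1)
      = fderiv ℝ (fun y => fderiv ℝ f y (Pi.single i 1)) x (Pi.single j 1)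
  rw [h2, h2, h1]

end pdcalc

section pdI
variable {m : ℕ}


lemma smooth_pd_iter {f : (Fin m → ℝ) → ℝ} (hf : ContDiff ℝ (⊤:ℕ∞) f) (i : Fin m) (k : ℕ) :
    ContDiff ℝ (⊤:ℕ∞) ((pd i)^[k] f) := by
  induction k generalizing f with
  | zero => exact hf
  | succ k ih => rw [Function.iterate_succ_apply]; exact ih (smooth_pd hf i)

lemma smooth_foldr (l : List (Fin m)) (I : Fin m → ℕ) {f : (Fin m → ℝ) → ℝ}
    (hf : ContDiff ℝ (⊤:ℕ∞) f) :
    ContDiff ℝ (⊤:ℕ∞) (l.foldr (fun i g => (pd i)^[I i] g) f) := by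
  induction l with
  | nil => exact hf
  | cons a t ih => exact smooth_pd_iter ih a (I a)

lemma pd_iter_comm {f : (Fin m → ℝ) → ℝ} (hf : ContDiff ℝ (⊤:ℕ∞) f) (i j : Fin m) (k : ℕ) :
    (pd i)^[k] (pd j f) = pd j ((pd i)^[k] f) := by
  induction k generalizing f with
  | zero => rfl
  | succ k ih =>
    rw [Function.iterate_succ_apply', Function.iterate_succ_apply', ih hf,
      pd_comm (smooth_pd_iter hf i k) i j]

lemma foldr_pd_comm (l : List (Fin m)) (I : Fin m → ℕ) {f : (Fin m → ℝ) → ℝ}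
    (hf : ContDiff ℝ (⊤:ℕ∞) f) (j : Fin m) :
    l.foldr (fun i g => (pd i)^[I i] g) (pd j f) = pd j (l.foldr (fun i g => (pd i)^[I i] g) f) := by
  induction l with
  | nil => rfl
  | cons a t ih =>
    show (pd a)^[I a] (t.foldr _ (pd j f)) = _
    rw [ih, pd_iter_comm (smooth_foldr t I hf) a j]
    rfl

lemma foldr_congr (l : List (Fin m)) (I I' : Fin m → ℕ) (h : ∀ k ∈ l, I k = I' k)
    (f : (Fin m → ℝ) → ℝ) :
    l.foldr (fun i g => (pd i)^[I i] g) f = l.foldr (fun i g => (pd i)^[I' i] g) f := by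
  induction l with
  | nil => rfl
  | cons a t ih =>
    show (pd a)^[I a] _ = (pd a)^[I' a] _
    rw [h a (List.mem_cons_self), ih (fun k hk => h k (List.mem_cons_of_mem a hk))]

lemma foldr_add_single (l : List (Fin m)) (hl : l.Nodup) (I I' : Fin m → ℕ) (j : Fin m)
    (hI' : ∀ k, I' k = I k + (Pi.single j 1 : Fin m → ℕ) k)
    (hj : j ∈ l) {f : (Fin m → ℝ) → ℝ} (hf : ContDiff ℝ (⊤:ℕ∞) f) :
    l.foldr (fun i g => (pd i)^[I' i] g) f
      = pd j (l.foldr (fun i g => (pd i)^[I i] g) f) := by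
  induction l with
  | nil => exact absurd hj List.not_mem_nil
  | cons a t ih =>
    have ha : a ∉ t := (List.nodup_cons.1 hl).1
    have ht : t.Nodup := (List.nodup_cons.1 hl).2
    simp only [List.foldr_cons]
    rcases List.mem_cons.1 hj with rfl | hjt
    · rw [foldr_congr t I' I
        (fun k hk => by
          have hkj : k ≠ j := fun h => ha (h ▸ hk)
          rw [hI' k, Pi.single_eq_of_ne hkj, add_zero])]
      have h1 : I' j = I j + 1 := by rw [hI' j, Pi.single_eq_same]
      rw [h1, Function.iterate_succ_apply']
    · have haj : a ≠ j := fun h => ha (h ▸ hjt)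
      rw [ih ht hjt]
      have h1 : I' a = I a := by rw [hI' a, Pi.single_eq_of_ne haj, add_zero]
      rw [h1, pd_iter_comm (smooth_foldr t I hf) a j]

lemma pdI_zero (f : (Fin m → ℝ) → ℝ) : pdI (0 : Fin m → ℕ) f = f := by
  show (List.finRange m).foldr _ f = f
  induction (List.finRange m) with
  | nil => rfl
  | cons a t ih => show (pd a)^[0] _ = f; simpa using ih

lemma pdI_idx2 {f : (Fin m → ℝ) → ℝ} (hf : ContDiff ℝ (⊤:ℕ∞) f) (i j : Fin m) :
    pdI (Pi.single i 1 + Pi.single j 1) f = pd j (pd i f) := by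
  show (List.finRange m).foldr _ f = _
  simp only [Pi.add_apply]
  rw [foldr_add_single _ (List.nodup_finRange m) (Pi.single i 1) _ j
    (fun k => rfl) (List.mem_finRange j) hf]
  rw [foldr_add_single _ (List.nodup_finRange m) 0 _ i
    (fun k => by simp) (List.mem_finRange i) hf]
  rw [show (List.finRange m).foldr (fun i g => (pd i)^[(0 : Fin m → ℕ) i] g) f
      = pdI (0 : Fin m → ℕ) f from rfl, pdI_zero]

end pdI


section comb
variable {m : ℕ}

lemma sum_pair (c : Fin m → Fin m → ℝ) (a b : Fin m) :
    ∑ i, ∑ j, (if i = a ∧ j = b then c i j else 0) = c a b := by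
  have h : ∀ i, (∑ j, if i = a ∧ j = b then c i j else 0) = if i = a then c i b else 0 := by
    intro i
    by_cases hi : i = a
    · simp [hi, Finset.sum_ite_eq']
    · simp [hi]
  rw [Finset.sum_congr rfl fun i _ => h i]
  simp [Finset.sum_ite_eq']

lemma sum_idx2_pd {h : (Fin m → ℝ) → ℝ} (hh : ContDiff ℝ (⊤:ℕ∞) h) (I : Idx m 2)
    (x : Fin m → ℝ) :
    ∑ i, ∑ j, (if idx2 i j = I then (nij i j)⁻¹ * pd j (pd i h) x else 0)
      = pdI I.1 h x := by
  obtain ⟨i0, j0, rfl⟩ := idx2_classify I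
  have hpdI : pdI (idx2 i0 j0).1 h = pd j0 (pd i0 h) := pdI_idx2 hh i0 j0
  rcases eq_or_ne i0 j0 with rfl | hne
  · have hc : ∀ i j : Fin m,
        (if idx2 i j = idx2 i0 i0 then (nij i j)⁻¹ * pd j (pd i h) x else 0)
          = if i = i0 ∧ j = i0 then (nij i j)⁻¹ * pd j (pd i h) x else 0 := by
      intro i j
      refine if_congr ?_ rfl rfl
      rw [idx2_eq_iff]
      constructor
      · rintro (⟨h1, h2⟩ | ⟨h1, h2⟩) <;> exact ⟨h1, h2⟩
      · rintro ⟨h1, h2⟩; exact Or.inl ⟨h1, h2⟩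
    rw [Finset.sum_congr rfl fun i _ => Finset.sum_congr rfl fun j _ => hc i j, sum_pair]
    rw [hpdI]
    simp [nij]
  · have hc : ∀ i j : Fin m,
        (if idx2 i j = idx2 i0 j0 then (nij i j)⁻¹ * pd j (pd i h) x else 0)
          = (if i = i0 ∧ j = j0 then (nij i j)⁻¹ * pd j (pd i h) x else 0)
            + (if i = j0 ∧ j = i0 then (nij i j)⁻¹ * pd j (pd i h) x else 0) := by
      intro i j
      rw [if_congr (idx2_eq_iff i j i0 j0) rfl rfl]
      by_cases hP : i = i0 ∧ j = j0
      · have hQ : ¬(i = j0 ∧ j = i0) := fun hQ => hne (hP.1.symm.trans hQ.1)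
        simp only [hP, hQ]
        simp [hP, hQ]
        exact fun h' _ => absurd h' hne
      · by_cases hQ : i = j0 ∧ j = i0
        · simp [hP, hQ]
          exact fun h' _ => absurd h'.symm hne
        · simp [hP, hQ]
    rw [Finset.sum_congr rfl fun i _ => Finset.sum_congr rfl fun j _ => hc i j]
    rw [Finset.sum_congr rfl fun i (_ : i ∈ Finset.univ) => Finset.sum_add_distrib,
      Finset.sum_add_distrib, sum_pair, sum_pair, hpdI]
    have h1 : nij i0 j0 = 2 := if_neg hne
    have h2 : nij j0 i0 = 2 := if_neg (Ne.symm hne)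
    rw [h1, h2, pd_comm hh j0 i0]
    ring

lemma sum_sum_idx2 (q : Idx m 2 → (Fin m → ℝ) → ℝ) (hq : ∀ I, ContDiff ℝ (⊤:ℕ∞) (q I))
    (x : Fin m → ℝ) :
    ∑ i, ∑ j, (nij i j)⁻¹ * pd j (pd i (q (idx2 i j))) x
      = ∑ I : Idx m 2, pdI I.1 (q I) x := by
  have step1 : ∀ i j : Fin m, (nij i j)⁻¹ * pd j (pd i (q (idx2 i j))) x
      = ∑ I : Idx m 2, (if idx2 i j = I then (nij i j)⁻¹ * pd j (pd i (q I)) x else 0) := by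
    intro i j
    rw [Finset.sum_ite_eq]
    simp
  calc ∑ i, ∑ j, (nij i j)⁻¹ * pd j (pd i (q (idx2 i j))) x
      = ∑ i, ∑ j, ∑ I : Idx m 2,
          (if idx2 i j = I then (nij i j)⁻¹ * pd j (pd i (q I)) x else 0) :=
        Finset.sum_congr rfl fun i _ => Finset.sum_congr rfl fun j _ => step1 i j
    _ = ∑ i, ∑ I : Idx m 2, ∑ j,
          (if idx2 i j = I then (nij i j)⁻¹ * pd j (pd i (q I)) x else 0) :=
        Finset.sum_congr rfl fun i _ => Finset.sum_comm
    _ = ∑ I : Idx m 2, ∑ i, ∑ j,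
          (if idx2 i j = I then (nij i j)⁻¹ * pd j (pd i (q I)) x else 0) :=
        Finset.sum_comm
    _ = ∑ I : Idx m 2, pdI I.1 (q I) x :=
        Finset.sum_congr rfl fun I _ => sum_idx2_pd (hq I) I x

end comb

section smoothness
variable {m n : ℕ}

lemma smooth_component {φ : (Fin m → ℝ) → Fin n → ℝ} (hφ : ContDiff ℝ (⊤:ℕ∞) φ) (α : Fin n) :
    ContDiff ℝ (⊤:ℕ∞) (fun y => φ y α) :=
  (ContinuousLinearMap.proj (R := ℝ) (φ := fun _ : Fin n => ℝ) α).contDiff.comp hφ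

lemma smooth_pdI {f : (Fin m → ℝ) → ℝ} (hf : ContDiff ℝ (⊤:ℕ∞) f) (I : Fin m → ℕ) :
    ContDiff ℝ (⊤:ℕ∞) (pdI I f) :=
  smooth_foldr _ I hf

lemma smooth_jet2 {φ : (Fin m → ℝ) → Fin n → ℝ} (hφ : ContDiff ℝ (⊤:ℕ∞) φ) :
    ContDiff ℝ (⊤:ℕ∞) (jet2 φ) := by
  refine contDiff_id.prodMk (hφ.prodMk (ContDiff.prodMk ?_ ?_))
  · exact contDiff_pi.2 fun i => contDiff_pi.2 fun α => smooth_pd (smooth_component hφ α) i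
  · exact contDiff_pi.2 fun I => contDiff_pi.2 fun α => smooth_pdI (smooth_component hφ α) I.1

lemma smooth_fderiv_apply {E : Type*} [NormedAddCommGroup E] [NormedSpace ℝ E]
    {G : E → ℝ} (hG : ContDiff ℝ (⊤:ℕ∞) G) (e : E) :
    ContDiff ℝ (⊤:ℕ∞) (fun a => fderiv ℝ G a e) :=
  (hG.fderiv_right (by exact_mod_cast le_top)).clm_apply contDiff_const

lemma smooth_dU {L : J2 m n → ℝ} (hL : ContDiff ℝ (⊤:ℕ∞) L) (α : Fin n) :
    ContDiff ℝ (⊤:ℕ∞) (dU α L) := smooth_fderiv_apply hL _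

lemma smooth_dU1 {L : J2 m n → ℝ} (hL : ContDiff ℝ (⊤:ℕ∞) L) (i : Fin m) (α : Fin n) :
    ContDiff ℝ (⊤:ℕ∞) (dU1 i α L) := smooth_fderiv_apply hL _

lemma smooth_dU2 {L : J2 m n → ℝ} (hL : ContDiff ℝ (⊤:ℕ∞) L) (I : Idx m 2) (α : Fin n) :
    ContDiff ℝ (⊤:ℕ∞) (dU2 I α L) := smooth_fderiv_apply hL _

end smoothness
section ham
variable {m n : ℕ}

lemma line_hasDerivAt {E F : Type*} [NormedAddCommGroup E] [NormedSpace ℝ E]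
    [NormedAddCommGroup F] [NormedSpace ℝ F] {G : E → F} (x : E)
    (hG : DifferentiableAt ℝ G x) (w : E) :
    HasDerivAt (fun t : ℝ => G (x + t • w)) (fderiv ℝ G x w) 0 := by
  have hline : HasDerivAt (fun t : ℝ => x + t • w) w 0 := by
    simpa using (((hasDerivAt_id (0:ℝ)).smul_const w).const_add x)
  have h0 : x = x + (0:ℝ) • w := by simp
  have hG' : HasFDerivAt G (fderiv ℝ G x) (x + (0:ℝ) • w) := h0 ▸ hG.hasFDerivAt
  have := hG'.comp_hasDerivAt (0:ℝ) hline
  simpa [Function.comp_def] using this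

/-- Embedding of the fourth component into `J2`. -/
def ι4 (m n : ℕ) : (Idx m 2 → Fin n → ℝ) →L[ℝ] J2 m n :=
  (0 : (Idx m 2 → Fin n → ℝ) →L[ℝ] (Fin m → ℝ)).prod
    ((0 : (Idx m 2 → Fin n → ℝ) →L[ℝ] (Fin n → ℝ)).prod
      ((0 : (Idx m 2 → Fin n → ℝ) →L[ℝ] (Fin m → Fin n → ℝ)).prod
        (ContinuousLinearMap.id ℝ _)))

lemma pi_double_decomp (d : Idx m 2 → Fin n → ℝ) :
    ∑ K : Idx m 2, ∑ β : Fin n,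
      d K β • (Pi.single K (Pi.single β 1) : Idx m 2 → Fin n → ℝ) = d := by
  funext K' β'
  simp only [Finset.sum_apply, Pi.smul_apply, smul_eq_mul, Pi.single_apply]
  simp [ite_apply, Pi.single_apply, mul_ite, mul_one, mul_zero, Finset.sum_ite_eq]

lemma clm_fourth (ℓ : J2 m n →L[ℝ] ℝ) (d : Idx m 2 → Fin n → ℝ) :
    ℓ ((0,0,0,d) : J2 m n) = ∑ K : Idx m 2, ∑ β : Fin n, d K β * ℓ (eU2 K β) := by
  have key : ∀ z : Idx m 2 → Fin n → ℝ, ℓ ((0,0,0,z) : J2 m n) = (ℓ.comp (ι4 m n)) z :=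
    fun z => rfl
  rw [key]
  conv_lhs => rw [← pi_double_decomp d]
  rw [map_sum]
  refine Finset.sum_congr rfl fun K _ => ?_
  rw [map_sum]
  refine Finset.sum_congr rfl fun β _ => ?_
  rw [map_smul, smul_eq_mul]
  rfl

lemma clm_split2 (ℓ : J2 m n →L[ℝ] ℝ) (s : Fin n → ℝ) (d : Idx m 2 → Fin n → ℝ) :
    ℓ ((0,s,0,d) : J2 m n) = ℓ ((0,s,0,0) : J2 m n) + ℓ ((0,0,0,d) : J2 m n) := by
  rw [← map_add]
  congr 1
  simp [Prod.ext_iff]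

lemma clm_split3 (ℓ : J2 m n →L[ℝ] ℝ) (s : Fin m → Fin n → ℝ) (d : Idx m 2 → Fin n → ℝ) :
    ℓ ((0,0,s,d) : J2 m n) = ℓ ((0,0,s,0) : J2 m n) + ℓ ((0,0,0,d) : J2 m n) := by
  rw [← map_add]
  congr 1
  simp [Prod.ext_iff]

end ham
section hamlem
variable {m n : ℕ}

lemma smooth_pf : ContDiff ℝ (⊤:ℕ∞) (fun v : Pb m n => ((v.1, v.2.1, v.2.2.1, v.2.2.2.2) : Pf m n)) := by
  exact contDiff_fst.prodMk ((contDiff_fst.comp contDiff_snd).prodMk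
    (((contDiff_fst.comp (contDiff_snd.comp contDiff_snd))).prodMk
      (contDiff_snd.comp (contDiff_snd.comp (contDiff_snd.comp contDiff_snd)))))

lemma smooth_Ham {L : J2 m n → ℝ} (hL : ContDiff ℝ (⊤:ℕ∞) L)
    {f : Pf m n → (Idx m 2 → Fin n → ℝ)} (hf : ContDiff ℝ (⊤:ℕ∞) f) :
    ContDiff ℝ (⊤:ℕ∞) (Ham L f) := by
  have c3 : ContDiff ℝ (⊤:ℕ∞) (fun v : Pb m n => v.2.2.1) :=
    contDiff_fst.comp (contDiff_snd.comp contDiff_snd)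
  have c4 : ContDiff ℝ (⊤:ℕ∞) (fun v : Pb m n => v.2.2.2.1) :=
    contDiff_fst.comp (contDiff_snd.comp (contDiff_snd.comp contDiff_snd))
  have hfp : ContDiff ℝ (⊤:ℕ∞) (fun v : Pb m n => f (v.1, v.2.1, v.2.2.1, v.2.2.2.2)) :=
    hf.comp smooth_pf
  have e1 : ∀ (i : Fin m) (β : Fin n),
      ContDiff ℝ (⊤:ℕ∞) (fun w : Fin m → Fin n → ℝ => w i β) := fun i β =>
    ((ContinuousLinearMap.proj (R := ℝ) (φ := fun _ : Fin n => ℝ) β).comp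
      (ContinuousLinearMap.proj (R := ℝ) (φ := fun _ : Fin m => Fin n → ℝ) i)).contDiff
  have e2 : ∀ (I : Idx m 2) (β : Fin n),
      ContDiff ℝ (⊤:ℕ∞) (fun w : Idx m 2 → Fin n → ℝ => w I β) := fun I β =>
    ((ContinuousLinearMap.proj (R := ℝ) (φ := fun _ : Fin n => ℝ) β).comp
      (ContinuousLinearMap.proj (R := ℝ) (φ := fun _ : Idx m 2 => Fin n → ℝ) I)).contDiff
  refine ContDiff.sub (ContDiff.add ?_ ?_) ?_
  · exact ContDiff.sum fun β _ => ContDiff.sum fun i _ =>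
      ContDiff.mul ((e1 i β).comp c4) ((e1 i β).comp c3)
  · exact ContDiff.sum fun β _ => ContDiff.sum fun I _ =>
      ContDiff.mul ((e2 I β).comp
        (contDiff_snd.comp (contDiff_snd.comp (contDiff_snd.comp contDiff_snd)))) ((e2 I β).comp hfp)
  · exact hL.comp (contDiff_fst.prodMk ((contDiff_fst.comp contDiff_snd).prodMk (c3.prodMk hfp)))

lemma hamP1 {L : J2 m n → ℝ} (hL : ContDiff ℝ (⊤:ℕ∞) L)
    {f : Pf m n → (Idx m 2 → Fin n → ℝ)} (hf : ContDiff ℝ (⊤:ℕ∞) f)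
    (v : Pb m n) (i : Fin m) (α : Fin n) :
    fderiv ℝ (Ham L f) v (eP1 i α) = v.2.2.1 i α := by
  have hdiff : DifferentiableAt ℝ (Ham L f) v :=
    ((smooth_Ham hL hf).differentiable (by simp)) v
  have h1 := line_hasDerivAt v hdiff (eP1 i α)
  have hE : (fun t : ℝ => Ham L f (v + t • eP1 i α)) =
      fun t : ℝ =>
        (∑ β, ∑ i', (v.2.2.2.1 i' β + t * (Pi.single i (Pi.single α 1) : Fin m → Fin n → ℝ) i' β) * v.2.2.1 i' β)
          + (∑ β, ∑ I : Idx m 2, v.2.2.2.2 I β * f (v.1, v.2.1, v.2.2.1, v.2.2.2.2) I β)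
          - L (v.1, v.2.1, v.2.2.1, f (v.1, v.2.1, v.2.2.1, v.2.2.2.2)) := by
    funext t
    simp only [Ham, eP1, Prod.fst_add, Prod.snd_add, Prod.smul_fst, Prod.smul_snd,
      smul_zero, add_zero, Pi.add_apply, Pi.smul_apply, smul_eq_mul, Pi.zero_apply]
  have h2 : HasDerivAt (fun t : ℝ => Ham L f (v + t • eP1 i α))
      (∑ β, ∑ i', (Pi.single i (Pi.single α 1) : Fin m → Fin n → ℝ) i' β * v.2.2.1 i' β) 0 := by
    rw [hE]
    refine HasDerivAt.sub_const _ (HasDerivAt.add_const _ ?_)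
    refine HasDerivAt.fun_sum fun β _ => HasDerivAt.fun_sum fun i' _ => ?_
    simpa using (((hasDerivAt_id (0:ℝ)).mul_const
      ((Pi.single i (Pi.single α 1) : Fin m → Fin n → ℝ) i' β)).const_add (v.2.2.2.1 i' β)).mul_const (v.2.2.1 i' β)
  have := h2.unique h1
  rw [← this]
  simp [Pi.single_apply, ite_apply, ite_mul, zero_mul, one_mul, Finset.sum_ite_eq']

lemma coord_hasDerivAt {F : ℝ → Idx m 2 → Fin n → ℝ} {d : Idx m 2 → Fin n → ℝ}
    (h : HasDerivAt F d 0) (K : Idx m 2) (β : Fin n) :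
    HasDerivAt (fun t => F t K β) (d K β) 0 := by
  have := ((ContinuousLinearMap.proj (R := ℝ) (φ := fun _ : Fin n => ℝ) β).comp
    (ContinuousLinearMap.proj (R := ℝ) (φ := fun _ : Idx m 2 => Fin n → ℝ) K)).hasFDerivAt.comp_hasDerivAt
    (0:ℝ) h
  simpa [Function.comp_def] using this

lemma hamP2 {L : J2 m n → ℝ} (hL : ContDiff ℝ (⊤:ℕ∞) L)
    {f : Pf m n → (Idx m 2 → Fin n → ℝ)} (hf : ContDiff ℝ (⊤:ℕ∞) f)
    (hf1 : ∀ (b : Pf m n) (K : Idx m 2) (α : Fin n),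
      dU2 K α L (b.1, b.2.1, b.2.2.1, f b) = b.2.2.2 K α)
    (v : Pb m n) (I : Idx m 2) (α : Fin n) :
    fderiv ℝ (Ham L f) v (eP2 I α)
      = f (v.1, v.2.1, v.2.2.1, v.2.2.2.2) I α := by
  have hdiff : DifferentiableAt ℝ (Ham L f) v :=
    ((smooth_Ham hL hf).differentiable (by simp)) v
  have h1 := line_hasDerivAt v hdiff (eP2 I α)
  set b : Pf m n := (v.1, v.2.1, v.2.2.1, v.2.2.2.2) with hb
  set w : Pf m n := (0, 0, 0, Pi.single I (Pi.single α 1)) with hw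
  set dF : Idx m 2 → Fin n → ℝ := fderiv ℝ f b w with hdF
  set c₀ : J2 m n := (v.1, v.2.1, v.2.2.1, f b) with hc
  -- derivative of the fibre-inverse along the line
  have hbw : HasDerivAt (fun t : ℝ => f (b + t • w)) dF 0 :=
    line_hasDerivAt b ((hf.differentiable (by simp)) b) w
  have hco : ∀ K β, HasDerivAt (fun t : ℝ => f (b + t • w) K β) (dF K β) 0 :=
    fun K β => coord_hasDerivAt hbw K β
  -- the curve in J2
  have hγ : HasDerivAt (fun t : ℝ => ((v.1, v.2.1, v.2.2.1, f (b + t • w)) : J2 m n))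
      (((0, 0, 0, dF) : J2 m n)) 0 :=
    (hasDerivAt_const _ _).prodMk ((hasDerivAt_const _ _).prodMk
      ((hasDerivAt_const _ _).prodMk hbw))
  have hLat : HasFDerivAt L (fderiv ℝ L c₀) ((v.1, v.2.1, v.2.2.1, f (b + (0:ℝ) • w)) : J2 m n) := by
    have h0 : b + (0:ℝ) • w = b := by simp
    rw [h0, ← hc]
    exact ((hL.differentiable (by simp)) c₀).hasFDerivAt
  have hLC : HasDerivAt (fun t : ℝ => L ((v.1, v.2.1, v.2.2.1, f (b + t • w)) : J2 m n))
      (fderiv ℝ L c₀ ((0, 0, 0, dF) : J2 m n)) 0 := by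
    have := hLat.comp_hasDerivAt (0:ℝ) hγ
    simpa [Function.comp_def] using this
  have hE : (fun t : ℝ => Ham L f (v + t • eP2 I α)) =
      fun t : ℝ =>
        ((∑ β, ∑ i', v.2.2.2.1 i' β * v.2.2.1 i' β)
          + ∑ β, ∑ K : Idx m 2,
              (v.2.2.2.2 K β + t * (Pi.single I (Pi.single α 1) : Idx m 2 → Fin n → ℝ) K β)
                * f (b + t • w) K β)
          - L ((v.1, v.2.1, v.2.2.1, f (b + t • w)) : J2 m n) := by
    funext t
    simp only [Ham, eP2, hb, hw, Prod.fst_add, Prod.snd_add, Prod.smul_fst, Prod.smul_snd,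
      smul_zero, add_zero, zero_add, Prod.mk_add_mk, Prod.smul_mk,
      Pi.add_apply, Pi.smul_apply, smul_eq_mul, Pi.zero_apply]
  have h2 : HasDerivAt (fun t : ℝ => Ham L f (v + t • eP2 I α))
      ((∑ β, ∑ K : Idx m 2,
          ((Pi.single I (Pi.single α 1) : Idx m 2 → Fin n → ℝ) K β * f b K β
            + v.2.2.2.2 K β * dF K β))
        - fderiv ℝ L c₀ ((0, 0, 0, dF) : J2 m n)) 0 := by
    rw [hE]
    refine HasDerivAt.sub ?_ hLC
    refine HasDerivAt.const_add _ ?_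
    refine HasDerivAt.fun_sum fun β _ => HasDerivAt.fun_sum fun K _ => ?_
    have := (((hasDerivAt_id (0:ℝ)).mul_const
      ((Pi.single I (Pi.single α 1) : Idx m 2 → Fin n → ℝ) K β)).const_add
      (v.2.2.2.2 K β)).fun_mul (hco K β)
    simpa using this
  have huniq := h2.unique h1
  rw [← huniq]
  have hp2 : ∀ (K : Idx m 2) (β : Fin n),
      fderiv ℝ L c₀ (eU2 K β) = v.2.2.2.2 K β := fun K β => hf1 b K β
  have hswap : ∑ β, ∑ K : Idx m 2, v.2.2.2.2 K β * dF K β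
      = ∑ K : Idx m 2, ∑ β, dF K β * v.2.2.2.2 K β := by
    rw [Finset.sum_comm]
    exact Finset.sum_congr rfl fun K _ => Finset.sum_congr rfl fun β _ => mul_comm _ _
  have hval1 : ∑ β, ∑ K : Idx m 2,
      ((Pi.single I (Pi.single α 1) : Idx m 2 → Fin n → ℝ) K β * f b K β) = f b I α := by
    simp [Pi.single_apply, ite_apply, ite_mul, zero_mul, one_mul, Finset.sum_ite_eq']
  have e1 : fderiv ℝ L c₀ ((0,0,0,dF) : J2 m n)
      = ∑ K : Idx m 2, ∑ β, dF K β * v.2.2.2.2 K β := by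
    rw [clm_fourth (fderiv ℝ L c₀) dF]
    exact Finset.sum_congr rfl fun K _ => Finset.sum_congr rfl fun β _ => by rw [hp2 K β]
  rw [e1,
    Finset.sum_congr rfl fun β (_ : β ∈ (Finset.univ : Finset (Fin n))) =>
      (Finset.sum_add_distrib (s := (Finset.univ : Finset (Idx m 2)))
        (f := fun K => (Pi.single I (Pi.single α 1) : Idx m 2 → Fin n → ℝ) K β * f b K β)
        (g := fun K => v.2.2.2.2 K β * dF K β)),
    Finset.sum_add_distrib, hval1, hswap, add_sub_cancel_right]

lemma hamU {L : J2 m n → ℝ} (hL : ContDiff ℝ (⊤:ℕ∞) L)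
    {f : Pf m n → (Idx m 2 → Fin n → ℝ)} (hf : ContDiff ℝ (⊤:ℕ∞) f)
    (hf1 : ∀ (b : Pf m n) (K : Idx m 2) (α : Fin n),
      dU2 K α L (b.1, b.2.1, b.2.2.1, f b) = b.2.2.2 K α)
    (v : Pb m n) (α : Fin n) :
    fderiv ℝ (Ham L f) v (ePU α)
      = - dU α L (v.1, v.2.1, v.2.2.1, f (v.1, v.2.1, v.2.2.1, v.2.2.2.2)) := by
  have hdiff : DifferentiableAt ℝ (Ham L f) v :=
    ((smooth_Ham hL hf).differentiable (by simp)) v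
  have h1 := line_hasDerivAt v hdiff (ePU α)
  set b : Pf m n := (v.1, v.2.1, v.2.2.1, v.2.2.2.2) with hb
  set w : Pf m n := (0, Pi.single α 1, 0, 0) with hw
  set dF : Idx m 2 → Fin n → ℝ := fderiv ℝ f b w with hdF
  set c₀ : J2 m n := (v.1, v.2.1, v.2.2.1, f b) with hc
  have hbw : HasDerivAt (fun t : ℝ => f (b + t • w)) dF 0 :=
    line_hasDerivAt b ((hf.differentiable (by simp)) b) w
  have hco : ∀ K β, HasDerivAt (fun t : ℝ => f (b + t • w) K β) (dF K β) 0 :=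
    fun K β => coord_hasDerivAt hbw K β
  have haff : HasDerivAt (fun t : ℝ => v.2.1 + t • (Pi.single α 1 : Fin n → ℝ)) ((Pi.single α 1 : Fin n → ℝ)) 0 := by
    simpa using ((hasDerivAt_id (0:ℝ)).smul_const ((Pi.single α 1 : Fin n → ℝ))).const_add v.2.1
  have hγ : HasDerivAt
      (fun t : ℝ => ((v.1, v.2.1 + t • (Pi.single α 1 : Fin n → ℝ), v.2.2.1, f (b + t • w)) : J2 m n))
      (((0, (Pi.single α 1 : Fin n → ℝ), 0, dF) : J2 m n)) 0 :=
    HasDerivAt.prodMk (hasDerivAt_const _ _) (haff.prodMk ((hasDerivAt_const _ _).prodMk hbw))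
  have hLat : HasFDerivAt L (fderiv ℝ L c₀)
      ((v.1, v.2.1 + (0:ℝ) • (Pi.single α 1 : Fin n → ℝ), v.2.2.1, f (b + (0:ℝ) • w)) : J2 m n) := by
    have h0 : b + (0:ℝ) • w = b := by simp
    have h0' : v.2.1 + (0:ℝ) • (Pi.single α 1 : Fin n → ℝ) = v.2.1 := by simp
    rw [h0, h0', ← hc]
    exact ((hL.differentiable (by simp)) c₀).hasFDerivAt
  have hLC : HasDerivAt
      (fun t : ℝ => L ((v.1, v.2.1 + t • (Pi.single α 1 : Fin n → ℝ), v.2.2.1, f (b + t • w)) : J2 m n))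
      (fderiv ℝ L c₀ ((0, (Pi.single α 1 : Fin n → ℝ), 0, dF) : J2 m n)) 0 := by
    have := hLat.comp_hasDerivAt (0:ℝ) hγ
    simpa [Function.comp_def] using this
  have hE : (fun t : ℝ => Ham L f (v + t • ePU α)) =
      fun t : ℝ =>
        ((∑ β, ∑ i', v.2.2.2.1 i' β * v.2.2.1 i' β)
          + ∑ β, ∑ K : Idx m 2, v.2.2.2.2 K β * f (b + t • w) K β)
          - L ((v.1, v.2.1 + t • (Pi.single α 1 : Fin n → ℝ), v.2.2.1, f (b + t • w)) : J2 m n) := by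
    funext t
    simp only [Ham, ePU, hb, hw, Prod.fst_add, Prod.snd_add, Prod.smul_fst, Prod.smul_snd,
      smul_zero, add_zero, zero_add, Prod.mk_add_mk, Prod.smul_mk,
      Pi.add_apply, Pi.smul_apply, smul_eq_mul, Pi.zero_apply]
  have h2 : HasDerivAt (fun t : ℝ => Ham L f (v + t • ePU α))
      ((∑ β, ∑ K : Idx m 2, v.2.2.2.2 K β * dF K β)
        - fderiv ℝ L c₀ ((0, (Pi.single α 1 : Fin n → ℝ), 0, dF) : J2 m n)) 0 := by
    rw [hE]
    refine HasDerivAt.sub (HasDerivAt.const_add _ ?_) hLC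
    exact HasDerivAt.fun_sum fun β _ => HasDerivAt.fun_sum fun K _ =>
      (hco K β).const_mul (v.2.2.2.2 K β)
  have huniq := h2.unique h1
  rw [← huniq]
  have hp2 : ∀ (K : Idx m 2) (β : Fin n),
      fderiv ℝ L c₀ (eU2 K β) = v.2.2.2.2 K β := fun K β => hf1 b K β
  have hswap : ∑ β, ∑ K : Idx m 2, v.2.2.2.2 K β * dF K β
      = ∑ K : Idx m 2, ∑ β, dF K β * v.2.2.2.2 K β := by
    rw [Finset.sum_comm]
    exact Finset.sum_congr rfl fun K _ => Finset.sum_congr rfl fun β _ => mul_comm _ _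
  have e1 : fderiv ℝ L c₀ ((0,0,0,dF) : J2 m n)
      = ∑ K : Idx m 2, ∑ β, dF K β * v.2.2.2.2 K β := by
    rw [clm_fourth (fderiv ℝ L c₀) dF]
    exact Finset.sum_congr rfl fun K _ => Finset.sum_congr rfl fun β _ => by rw [hp2 K β]
  have hdUc : fderiv ℝ L c₀ ((0, (Pi.single α 1 : Fin n → ℝ), 0, 0) : J2 m n) = dU α L c₀ := rfl
  rw [clm_split2 (fderiv ℝ L c₀) ((Pi.single α 1 : Fin n → ℝ)) dF, e1, hdUc, hswap]
  ring

lemma hamU1 {L : J2 m n → ℝ} (hL : ContDiff ℝ (⊤:ℕ∞) L)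
    {f : Pf m n → (Idx m 2 → Fin n → ℝ)} (hf : ContDiff ℝ (⊤:ℕ∞) f)
    (hf1 : ∀ (b : Pf m n) (K : Idx m 2) (α : Fin n),
      dU2 K α L (b.1, b.2.1, b.2.2.1, f b) = b.2.2.2 K α)
    (v : Pb m n) (i : Fin m) (α : Fin n) :
    fderiv ℝ (Ham L f) v (ePU1 i α)
      = v.2.2.2.1 i α
        - dU1 i α L (v.1, v.2.1, v.2.2.1, f (v.1, v.2.1, v.2.2.1, v.2.2.2.2)) := by
  have hdiff : DifferentiableAt ℝ (Ham L f) v :=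
    ((smooth_Ham hL hf).differentiable (by simp)) v
  have h1 := line_hasDerivAt v hdiff (ePU1 i α)
  set b : Pf m n := (v.1, v.2.1, v.2.2.1, v.2.2.2.2) with hb
  set w : Pf m n := (0, 0, Pi.single i (Pi.single α 1), 0) with hw
  set dF : Idx m 2 → Fin n → ℝ := fderiv ℝ f b w with hdF
  set c₀ : J2 m n := (v.1, v.2.1, v.2.2.1, f b) with hc
  have hbw : HasDerivAt (fun t : ℝ => f (b + t • w)) dF 0 :=
    line_hasDerivAt b ((hf.differentiable (by simp)) b) w
  have hco : ∀ K β, HasDerivAt (fun t : ℝ => f (b + t • w) K β) (dF K β) 0 :=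
    fun K β => coord_hasDerivAt hbw K β
  have haff : HasDerivAt
      (fun t : ℝ => v.2.2.1 + t • (Pi.single i (Pi.single α 1) : Fin m → Fin n → ℝ)) ((Pi.single i (Pi.single α 1) : Fin m → Fin n → ℝ)) 0 := by
    simpa using ((hasDerivAt_id (0:ℝ)).smul_const ((Pi.single i (Pi.single α 1) : Fin m → Fin n → ℝ))).const_add v.2.2.1
  have hγ : HasDerivAt
      (fun t : ℝ =>
        ((v.1, v.2.1, v.2.2.1 + t • (Pi.single i (Pi.single α 1) : Fin m → Fin n → ℝ), f (b + t • w)) : J2 m n))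
      (((0, 0, (Pi.single i (Pi.single α 1) : Fin m → Fin n → ℝ), dF) : J2 m n)) 0 :=
    HasDerivAt.prodMk (hasDerivAt_const _ _) (HasDerivAt.prodMk (hasDerivAt_const _ _) (haff.prodMk hbw))
  have hLat : HasFDerivAt L (fderiv ℝ L c₀)
      ((v.1, v.2.1, v.2.2.1 + (0:ℝ) • (Pi.single i (Pi.single α 1) : Fin m → Fin n → ℝ), f (b + (0:ℝ) • w)) : J2 m n) := by
    have h0 : b + (0:ℝ) • w = b := by simp
    have h0' : v.2.2.1 + (0:ℝ) • (Pi.single i (Pi.single α 1) : Fin m → Fin n → ℝ) = v.2.2.1 := by simp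
    rw [h0, h0', ← hc]
    exact ((hL.differentiable (by simp)) c₀).hasFDerivAt
  have hLC : HasDerivAt
      (fun t : ℝ =>
        L ((v.1, v.2.1, v.2.2.1 + t • (Pi.single i (Pi.single α 1) : Fin m → Fin n → ℝ), f (b + t • w)) : J2 m n))
      (fderiv ℝ L c₀ ((0, 0, (Pi.single i (Pi.single α 1) : Fin m → Fin n → ℝ), dF) : J2 m n)) 0 := by
    have := hLat.comp_hasDerivAt (0:ℝ) hγ
    simpa [Function.comp_def] using this
  have hE : (fun t : ℝ => Ham L f (v + t • ePU1 i α)) =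
      fun t : ℝ =>
        ((∑ β, ∑ i', v.2.2.2.1 i' β
            * (v.2.2.1 i' β + t * (Pi.single i (Pi.single α 1) : Fin m → Fin n → ℝ) i' β))
          + ∑ β, ∑ K : Idx m 2, v.2.2.2.2 K β * f (b + t • w) K β)
          - L ((v.1, v.2.1, v.2.2.1 + t • (Pi.single i (Pi.single α 1) : Fin m → Fin n → ℝ), f (b + t • w)) : J2 m n) := by
    funext t
    simp only [Ham, ePU1, hb, hw, Prod.fst_add, Prod.snd_add, Prod.smul_fst, Prod.smul_snd,
      smul_zero, add_zero, zero_add, Prod.mk_add_mk, Prod.smul_mk,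
      Pi.add_apply, Pi.smul_apply, smul_eq_mul, Pi.zero_apply]
  have h2 : HasDerivAt (fun t : ℝ => Ham L f (v + t • ePU1 i α))
      (((∑ β, ∑ i', v.2.2.2.1 i' β * (Pi.single i (Pi.single α 1) : Fin m → Fin n → ℝ) i' β)
          + ∑ β, ∑ K : Idx m 2, v.2.2.2.2 K β * dF K β)
        - fderiv ℝ L c₀ ((0, 0, (Pi.single i (Pi.single α 1) : Fin m → Fin n → ℝ), dF) : J2 m n)) 0 := by
    rw [hE]
    refine HasDerivAt.sub (HasDerivAt.add ?_ ?_) hLC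
    · refine HasDerivAt.fun_sum fun β _ => HasDerivAt.fun_sum fun i' _ => ?_
      have := (((hasDerivAt_id (0:ℝ)).mul_const
        ((Pi.single i (Pi.single α 1) : Fin m → Fin n → ℝ) i' β)).const_add
        (v.2.2.1 i' β)).const_mul (v.2.2.2.1 i' β)
      simpa using this
    · exact HasDerivAt.fun_sum fun β _ => HasDerivAt.fun_sum fun K _ =>
        (hco K β).const_mul (v.2.2.2.2 K β)
  have huniq := h2.unique h1
  rw [← huniq]
  have hp2 : ∀ (K : Idx m 2) (β : Fin n),
      fderiv ℝ L c₀ (eU2 K β) = v.2.2.2.2 K β := fun K β => hf1 b K β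
  have hswap : ∑ β, ∑ K : Idx m 2, v.2.2.2.2 K β * dF K β
      = ∑ K : Idx m 2, ∑ β, dF K β * v.2.2.2.2 K β := by
    rw [Finset.sum_comm]
    exact Finset.sum_congr rfl fun K _ => Finset.sum_congr rfl fun β _ => mul_comm _ _
  have e1 : fderiv ℝ L c₀ ((0,0,0,dF) : J2 m n)
      = ∑ K : Idx m 2, ∑ β, dF K β * v.2.2.2.2 K β := by
    rw [clm_fourth (fderiv ℝ L c₀) dF]
    exact Finset.sum_congr rfl fun K _ => Finset.sum_congr rfl fun β _ => by rw [hp2 K β]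
  have hdU1c : fderiv ℝ L c₀ ((0, 0, (Pi.single i (Pi.single α 1) : Fin m → Fin n → ℝ), 0) : J2 m n)
      = dU1 i α L c₀ := rfl
  have hvalp1 : ∑ β, ∑ i', v.2.2.2.1 i' β
      * (Pi.single i (Pi.single α 1) : Fin m → Fin n → ℝ) i' β = v.2.2.2.1 i α := by
    simp [Pi.single_apply, ite_apply, mul_ite, mul_one, mul_zero, Finset.sum_ite_eq']
  rw [clm_split3 (fderiv ℝ L c₀) ((Pi.single i (Pi.single α 1) : Fin m → Fin n → ℝ)) dF, e1, hdU1c, hswap, hvalp1]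
  ring


lemma pd_sub_apply {A B : (Fin m → ℝ) → ℝ} {x : Fin m → ℝ}
    (hA : DifferentiableAt ℝ A x) (hB : DifferentiableAt ℝ B x) (i : Fin m) :
    pd i (fun y => A y - B y) x = pd i A x - pd i B x := by
  unfold pd
  rw [fderiv_fun_sub hA hB]
  simp

lemma pd_add_apply {A B : (Fin m → ℝ) → ℝ} {x : Fin m → ℝ}
    (hA : DifferentiableAt ℝ A x) (hB : DifferentiableAt ℝ B x) (i : Fin m) :
    pd i (fun y => A y + B y) x = pd i A x + pd i B x := by
  unfold pd
  rw [fderiv_fun_add hA hB]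
  simp

lemma pd_const_mul_apply {A : (Fin m → ℝ) → ℝ} {x : Fin m → ℝ}
    (hA : DifferentiableAt ℝ A x) (c : ℝ) (i : Fin m) :
    pd i (fun y => c * A y) x = c * pd i A x := by
  unfold pd
  rw [fderiv_const_mul hA c]
  simp

lemma pd_sum_apply {ι : Type*} {s : Finset ι} {G : ι → (Fin m → ℝ) → ℝ} {x : Fin m → ℝ}
    (hG : ∀ j ∈ s, DifferentiableAt ℝ (G j) x) (i : Fin m) :
    pd i (fun y => ∑ j ∈ s, G j y) x = ∑ j ∈ s, pd i (G j) x := by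
  unfold pd
  rw [fderiv_fun_sum hG]
  simp

lemma nij_comm (i j : Fin m) : nij i j = nij j i := by
  unfold nij
  by_cases h : i = j
  · simp [h]
  · rw [if_neg h, if_neg (Ne.symm h)]

lemma idx2_comm (i j : Fin m) : idx2 i j = idx2 j i := Subtype.ext (add_comm _ _)

lemma sum_sum_idx2' (q : Idx m 2 → (Fin m → ℝ) → ℝ) (hq : ∀ I, ContDiff ℝ (⊤:ℕ∞) (q I))
    (x : Fin m → ℝ) :
    ∑ i, ∑ j, (nij i j)⁻¹ * pd i (pd j (q (idx2 i j))) x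
      = ∑ I : Idx m 2, pdI I.1 (q I) x := by
  rw [Finset.sum_congr rfl fun i (_ : i ∈ Finset.univ) =>
    Finset.sum_congr rfl fun j (_ : j ∈ Finset.univ) => by
      rw [pd_comm (hq (idx2 i j)) i j]]
  exact sum_sum_idx2 q hq x

lemma sec_jet2 {f : Pf m n → (Idx m 2 → Fin n → ℝ)}
    {φ : (Fin m → ℝ) → Fin n → ℝ}
    {u1 : Fin m → Fin n → (Fin m → ℝ) → ℝ}
    {p1 : Fin m → Fin n → (Fin m → ℝ) → ℝ}
    {p2 : Idx m 2 → Fin n → (Fin m → ℝ) → ℝ}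
    (hu1v : ∀ i β y, u1 i β y = pd i (fun z => φ z β) y)
    (hfjv : ∀ y I β, f ((sec φ u1 p1 p2 y).1, (sec φ u1 p1 p2 y).2.1,
        (sec φ u1 p1 p2 y).2.2.1, (sec φ u1 p1 p2 y).2.2.2.2) I β
      = pdI I.1 (fun z => φ z β) y) (y : Fin m → ℝ) :
    ((sec φ u1 p1 p2 y).1, (sec φ u1 p1 p2 y).2.1, (sec φ u1 p1 p2 y).2.2.1,
      f ((sec φ u1 p1 p2 y).1, (sec φ u1 p1 p2 y).2.1, (sec φ u1 p1 p2 y).2.2.1,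
        (sec φ u1 p1 p2 y).2.2.2.2)) = jet2 φ y := by
  have h3 : (fun i β => u1 i β y) = fun i β => pd i (fun z => φ z β) y :=
    funext fun i => funext fun β => hu1v i β y
  have h4 : f ((sec φ u1 p1 p2 y).1, (sec φ u1 p1 p2 y).2.1,
      (sec φ u1 p1 p2 y).2.2.1, (sec φ u1 p1 p2 y).2.2.2.2)
        = fun I β => pdI I.1 (fun z => φ z β) y :=
    funext fun I => funext fun β => hfjv y I β
  show (y, φ y, (fun i β => u1 i β y),
      f ((sec φ u1 p1 p2 y).1, (sec φ u1 p1 p2 y).2.1, (sec φ u1 p1 p2 y).2.2.1,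
        (sec φ u1 p1 p2 y).2.2.2.2)) = jet2 φ y
  rw [h3, h4]
  rfl
end hamlem
/-- `φ` satisfies the Euler–Lagrange field equations of `L` iff there are
smooth functions `u₁, p₁, p₂` solving the Hamilton–De Donder–Weyl equations of the
Hamiltonian `H` built from a two-sided fiber inverse `f` of the Legendre fiber map. -/
theorem statement8 (m n : ℕ) (L : J2 m n → ℝ) (hL : ContDiff ℝ (⊤ : ℕ∞) L)
    (f : Pf m n → (Idx m 2 → Fin n → ℝ)) (hf : ContDiff ℝ (⊤ : ℕ∞) f)
    (hf1 : ∀ (b : Pf m n) (K : Idx m 2) (α : Fin n),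
      dU2 K α L (b.1, b.2.1, b.2.2.1, f b) = b.2.2.2 K α)
    (hf2 : ∀ (x : Fin m → ℝ) (u : Fin n → ℝ) (u1 : Fin m → Fin n → ℝ)
        (w : Idx m 2 → Fin n → ℝ) (I : Idx m 2) (α : Fin n),
      f (x, u, u1, fun K β => dU2 K β L (x, u, u1, w)) I α = w I α)
    (φ : (Fin m → ℝ) → Fin n → ℝ) (hφ : ContDiff ℝ (⊤ : ℕ∞) φ) :
    (∀ (α : Fin n) (x : Fin m → ℝ), EL L φ α x = 0)
      ↔ ∃ (u1 : Fin m → Fin n → (Fin m → ℝ) → ℝ)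
          (p1 : Fin m → Fin n → (Fin m → ℝ) → ℝ)
          (p2 : Idx m 2 → Fin n → (Fin m → ℝ) → ℝ),
          (∀ i α, ContDiff ℝ (⊤ : ℕ∞) (u1 i α)) ∧
          (∀ i α, ContDiff ℝ (⊤ : ℕ∞) (p1 i α)) ∧
          (∀ I α, ContDiff ℝ (⊤ : ℕ∞) (p2 I α)) ∧
          ∀ x : Fin m → ℝ,
            (∀ (i : Fin m) (α : Fin n),
              pd i (fun y => φ y α) x
                = fderiv ℝ (Ham L f) (sec φ u1 p1 p2 x) (eP1 i α)) ∧
            (∀ (I : Idx m 2) (α : Fin n),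
              (∑ i, ∑ j, if idx2 i j = I then (nij i j)⁻¹ * pd j (u1 i α) x else 0)
                = fderiv ℝ (Ham L f) (sec φ u1 p1 p2 x) (eP2 I α)) ∧
            (∀ α : Fin n,
              (∑ i, pd i (p1 i α) x)
                = - fderiv ℝ (Ham L f) (sec φ u1 p1 p2 x) (ePU α)) ∧
            (∀ (i : Fin m) (α : Fin n),
              (∑ j, (nij i j)⁻¹ * pd j (p2 (idx2 i j) α) x)
                = - fderiv ℝ (Ham L f) (sec φ u1 p1 p2 x) (ePU1 i α)) := by
  have hcast : ((⊤:ℕ∞) : WithTop ℕ∞) ≤ ((⊤:ℕ∞) : WithTop ℕ∞) := le_refl _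
  constructor
  · -- Forward direction
    intro hEL
    refine ⟨fun i α x => pd i (fun y => φ y α) x,
      fun i α x => dU1 i α L (jet2 φ x)
        - ∑ j, (nij i j)⁻¹ * pd j (fun y => dU2 (idx2 i j) α L (jet2 φ y)) x,
      fun I α x => dU2 I α L (jet2 φ x), ?_, ?_, ?_, ?_⟩
    · exact fun i α => smooth_pd (smooth_component hφ α) i
    · intro i α
      refine ContDiff.sub ((smooth_dU1 hL i α).comp (smooth_jet2 hφ)) ?_
      exact ContDiff.sum fun j _ => contDiff_const.mul
        (smooth_pd ((smooth_dU2 hL (idx2 i j) α).comp (smooth_jet2 hφ)) j)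
    · exact fun I α => (smooth_dU2 hL I α).comp (smooth_jet2 hφ)
    intro x
    set u1v : Fin m → Fin n → (Fin m → ℝ) → ℝ := fun i α x => pd i (fun y => φ y α) x with hu1v
    set p1v : Fin m → Fin n → (Fin m → ℝ) → ℝ := fun i α x =>
      dU1 i α L (jet2 φ x)
        - ∑ j, (nij i j)⁻¹ * pd j (fun y => dU2 (idx2 i j) α L (jet2 φ y)) x with hp1v
    set p2v : Idx m 2 → Fin n → (Fin m → ℝ) → ℝ := fun I α x => dU2 I α L (jet2 φ x) with hp2v
    have hfjv : ∀ (y : Fin m → ℝ) (I : Idx m 2) (β : Fin n),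
        f ((sec φ u1v p1v p2v y).1, (sec φ u1v p1v p2v y).2.1,
          (sec φ u1v p1v p2v y).2.2.1, (sec φ u1v p1v p2v y).2.2.2.2) I β
        = pdI I.1 (fun z => φ z β) y := fun y I β =>
      hf2 y (φ y) (fun i β' => pd i (fun z => φ z β') y)
        (fun I' β' => pdI I'.1 (fun z => φ z β') y) I β
    have hjet : ∀ y : Fin m → ℝ,
        ((sec φ u1v p1v p2v y).1, (sec φ u1v p1v p2v y).2.1, (sec φ u1v p1v p2v y).2.2.1,
          f ((sec φ u1v p1v p2v y).1, (sec φ u1v p1v p2v y).2.1, (sec φ u1v p1v p2v y).2.2.1,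
            (sec φ u1v p1v p2v y).2.2.2.2)) = jet2 φ y :=
      fun y => sec_jet2 (fun i β y' => rfl) hfjv y
    refine ⟨?_, ?_, ?_, ?_⟩
    · -- equation 1
      intro i α
      rw [hamP1 hL hf (sec φ u1v p1v p2v x) i α]
      rfl
    · -- equation 2
      intro I α
      rw [hamP2 hL hf hf1 (sec φ u1v p1v p2v x) I α]
      have h2 := hfjv x I α
      exact (sum_idx2_pd (smooth_component hφ α) I x).trans h2.symm
    · -- equation 3
      intro α
      rw [hamU hL hf hf1 (sec φ u1v p1v p2v x) α, neg_neg]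
      have hD1 : ∀ i', ContDiff ℝ (⊤:ℕ∞) (fun y => dU1 i' α L (jet2 φ y)) :=
        fun i' => (smooth_dU1 hL i' α).comp (smooth_jet2 hφ)
      have hD2 : ∀ (K : Idx m 2), ContDiff ℝ (⊤:ℕ∞) (fun y => dU2 K α L (jet2 φ y)) :=
        fun K => (smooth_dU2 hL K α).comp (smooth_jet2 hφ)
      have hsum : ∀ i', ContDiff ℝ (⊤:ℕ∞)
          (fun y => ∑ j, (nij i' j)⁻¹ * pd j (fun z => dU2 (idx2 i' j) α L (jet2 φ z)) y) :=
        fun i' => ContDiff.sum fun j _ => contDiff_const.mul (smooth_pd (hD2 (idx2 i' j)) j)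
      have hstep : ∀ i', pd i' (p1v i' α) x
          = pd i' (fun y => dU1 i' α L (jet2 φ y)) x
            - ∑ j, (nij i' j)⁻¹
                * pd i' (pd j (fun z => dU2 (idx2 i' j) α L (jet2 φ z))) x := by
        intro i'
        have := pd_sub_apply (x := x) ((hD1 i').differentiable (by simp) x)
          ((hsum i').differentiable (by simp) x) i'
        rw [show p1v i' α = fun y => dU1 i' α L (jet2 φ y)
            - ∑ j, (nij i' j)⁻¹ * pd j (fun z => dU2 (idx2 i' j) α L (jet2 φ z)) y from rfl]
        rw [this]
        congr 1
        rw [pd_sum_apply (fun j _ => (contDiff_const.mul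
          (smooth_pd (hD2 (idx2 i' j)) j)).differentiable (by simp) x) i']
        exact Finset.sum_congr rfl fun j _ => pd_const_mul_apply
          ((smooth_pd (hD2 (idx2 i' j)) j).differentiable (by simp) x) _ i'
      have hELx := hEL α x
      rw [show EL L φ α x = dU α L (jet2 φ x)
          - (∑ i', pd i' (fun y => dU1 i' α L (jet2 φ y)) x)
          + ∑ I : Idx m 2, pdI I.1 (fun y => dU2 I α L (jet2 φ y)) x from rfl] at hELx
      have hswap2 : ∑ i', ∑ j, (nij i' j)⁻¹
          * pd i' (pd j (fun z => dU2 (idx2 i' j) α L (jet2 φ z))) x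
          = ∑ I : Idx m 2, pdI I.1 (fun y => dU2 I α L (jet2 φ y)) x :=
        sum_sum_idx2' (fun I => fun y => dU2 I α L (jet2 φ y)) hD2 x
      have hsplit : ∑ i', pd i' (p1v i' α) x
          = (∑ i', pd i' (fun y => dU1 i' α L (jet2 φ y)) x)
            - ∑ i', ∑ j, (nij i' j)⁻¹
                * pd i' (pd j (fun z => dU2 (idx2 i' j) α L (jet2 φ z))) x := by
        rw [Finset.sum_congr rfl fun i' (_ : i' ∈ Finset.univ) => hstep i', Finset.sum_sub_distrib]
      have hjx := hjet x
      rw [show dU α L ((sec φ u1v p1v p2v x).1, (sec φ u1v p1v p2v x).2.1,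
          (sec φ u1v p1v p2v x).2.2.1,
          f ((sec φ u1v p1v p2v x).1, (sec φ u1v p1v p2v x).2.1, (sec φ u1v p1v p2v x).2.2.1,
            (sec φ u1v p1v p2v x).2.2.2.2)) = dU α L (jet2 φ x) from by rw [hjx]]
      rw [hsplit, hswap2]
      linarith
    · -- equation 4
      intro i α
      rw [hamU1 hL hf hf1 (sec φ u1v p1v p2v x) i α]
      have hjx := hjet x
      rw [show dU1 i α L ((sec φ u1v p1v p2v x).1, (sec φ u1v p1v p2v x).2.1,
          (sec φ u1v p1v p2v x).2.2.1,
          f ((sec φ u1v p1v p2v x).1, (sec φ u1v p1v p2v x).2.1, (sec φ u1v p1v p2v x).2.2.1,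
            (sec φ u1v p1v p2v x).2.2.2.2)) = dU1 i α L (jet2 φ x) from by rw [hjx]]
      show (∑ j, (nij i j)⁻¹ * pd j (fun y => dU2 (idx2 i j) α L (jet2 φ y)) x)
        = -((dU1 i α L (jet2 φ x)
            - ∑ j, (nij i j)⁻¹ * pd j (fun y => dU2 (idx2 i j) α L (jet2 φ y)) x)
          - dU1 i α L (jet2 φ x))
      ring
  · -- Backward direction
    rintro ⟨u1, p1, p2, hu1s, hp1s, hp2s, hmain⟩
    intro α x
    have e1 : ∀ (i : Fin m) (β : Fin n) (y : Fin m → ℝ),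
        u1 i β y = pd i (fun z => φ z β) y := by
      intro i β y
      have h := (hmain y).1 i β
      rw [hamP1 hL hf (sec φ u1 p1 p2 y) i β] at h
      exact h.symm
    have hu1fun : ∀ (i : Fin m) (β : Fin n), u1 i β = pd i (fun z => φ z β) :=
      fun i β => funext fun y => e1 i β y
    have hfjv : ∀ (y : Fin m → ℝ) (I : Idx m 2) (β : Fin n),
        f ((sec φ u1 p1 p2 y).1, (sec φ u1 p1 p2 y).2.1, (sec φ u1 p1 p2 y).2.2.1,
          (sec φ u1 p1 p2 y).2.2.2.2) I β = pdI I.1 (fun z => φ z β) y := by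
      intro y I β
      have h := (hmain y).2.1 I β
      rw [hamP2 hL hf hf1 (sec φ u1 p1 p2 y) I β] at h
      refine h.symm.trans ?_
      simp only [hu1fun]
      exact sum_idx2_pd (smooth_component hφ β) I y
    have hjet : ∀ y : Fin m → ℝ,
        ((sec φ u1 p1 p2 y).1, (sec φ u1 p1 p2 y).2.1, (sec φ u1 p1 p2 y).2.2.1,
          f ((sec φ u1 p1 p2 y).1, (sec φ u1 p1 p2 y).2.1, (sec φ u1 p1 p2 y).2.2.1,
            (sec φ u1 p1 p2 y).2.2.2.2)) = jet2 φ y :=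
      fun y => sec_jet2 e1 hfjv y
    have hp2val : ∀ (K : Idx m 2) (β : Fin n) (y : Fin m → ℝ),
        p2 K β y = dU2 K β L (jet2 φ y) := by
      intro K β y
      have h : dU2 K β L ((sec φ u1 p1 p2 y).1, (sec φ u1 p1 p2 y).2.1,
          (sec φ u1 p1 p2 y).2.2.1,
          f ((sec φ u1 p1 p2 y).1, (sec φ u1 p1 p2 y).2.1, (sec φ u1 p1 p2 y).2.2.1,
            (sec φ u1 p1 p2 y).2.2.2.2)) = p2 K β y :=
        hf1 ((sec φ u1 p1 p2 y).1, (sec φ u1 p1 p2 y).2.1, (sec φ u1 p1 p2 y).2.2.1,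
          (sec φ u1 p1 p2 y).2.2.2.2) K β
      rw [hjet y] at h
      exact h.symm
    have hp2fun : ∀ (K : Idx m 2) (β : Fin n), p2 K β = fun y => dU2 K β L (jet2 φ y) :=
      fun K β => funext fun y => hp2val K β y
    have e3 : ∀ y : Fin m → ℝ, ∑ i, pd i (p1 i α) y = dU α L (jet2 φ y) := by
      intro y
      have h := (hmain y).2.2.1 α
      rw [hamU hL hf hf1 (sec φ u1 p1 p2 y) α, hjet y, neg_neg] at h
      exact h
    have e4 : ∀ (i : Fin m) (y : Fin m → ℝ),
        p1 i α y = dU1 i α L (jet2 φ y)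
          - ∑ j, (nij i j)⁻¹ * pd j (p2 (idx2 i j) α) y := by
      intro i y
      have h := (hmain y).2.2.2 i α
      rw [hamU1 hL hf hf1 (sec φ u1 p1 p2 y) i α, hjet y] at h
      have h' : (∑ j, (nij i j)⁻¹ * pd j (p2 (idx2 i j) α) y)
          = -(p1 i α y - dU1 i α L (jet2 φ y)) := h
      linarith
    show EL L φ α x = 0
    rw [show EL L φ α x = dU α L (jet2 φ x)
        - (∑ i, pd i (fun y => dU1 i α L (jet2 φ y)) x)
        + ∑ I : Idx m 2, pdI I.1 (fun y => dU2 I α L (jet2 φ y)) x from rfl]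
    have hD1eq : ∀ i : Fin m, (fun y => dU1 i α L (jet2 φ y))
        = fun y => p1 i α y + ∑ j, (nij i j)⁻¹ * pd j (p2 (idx2 i j) α) y :=
      fun i => funext fun y => by rw [e4 i y]; ring
    have hsum : ∀ i : Fin m, ContDiff ℝ (⊤:ℕ∞)
        (fun y => ∑ j, (nij i j)⁻¹ * pd j (p2 (idx2 i j) α) y) :=
      fun i => ContDiff.sum fun j _ => contDiff_const.mul (smooth_pd (hp2s (idx2 i j) α) j)
    have hstep : ∀ i : Fin m, pd i (fun y => dU1 i α L (jet2 φ y)) x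
        = pd i (p1 i α) x + ∑ j, (nij i j)⁻¹ * pd i (pd j (p2 (idx2 i j) α)) x := by
      intro i
      rw [hD1eq i]
      rw [pd_add_apply ((hp1s i α).differentiable (by simp) x)
        ((hsum i).differentiable (by simp) x) i]
      congr 1
      rw [pd_sum_apply (fun j _ => (contDiff_const.mul
        (smooth_pd (hp2s (idx2 i j) α) j)).differentiable (by simp) x) i]
      exact Finset.sum_congr rfl fun j _ => pd_const_mul_apply
        ((smooth_pd (hp2s (idx2 i j) α) j).differentiable (by simp) x) _ i
    have hswap2 : ∑ i, ∑ j, (nij i j)⁻¹ * pd i (pd j (p2 (idx2 i j) α)) x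
        = ∑ I : Idx m 2, pdI I.1 (p2 I α) x :=
      sum_sum_idx2' (fun I => p2 I α) (fun I => hp2s I α) x
    have hq2 : ∑ I : Idx m 2, pdI I.1 (fun y => dU2 I α L (jet2 φ y)) x
        = ∑ I : Idx m 2, pdI I.1 (p2 I α) x :=
      Finset.sum_congr rfl fun I _ => by rw [hp2fun I α]
    rw [Finset.sum_congr rfl fun i (_ : i ∈ Finset.univ) => hstep i,
      Finset.sum_add_distrib, hswap2, hq2, e3 x]
    ring
end
end
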